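/- arXiv:math-ph/0408015 — 4 statements merged into one kernel-verified Lean document; each statement's English description precedes it below -/
import Mathlib

section
/- Let d ≥ 1 and let A and B be complex hermitian d×d matrices with B positive semidefinite. Then for every z ≥ 0 the second derivative of φ^{A,B}(z) = tr(exp(A − zB)) satisfies (d²/dz²) tr(exp(A − zB)) = tr( (∫_0^1 exp(−s(A − zB))·B·exp(s(A − zB))·B ds) · exp(A − zB) ). -/
open Matrix NormedSpace
open scoped ComplexOrder

section BMVAbstract

open intervalIntegral

variable {𝔸 : Type*} [NormedRing 𝔸] [NormedAlgebra ℝ 𝔸] [NormedAlgebra ℚ 𝔸] [CompleteSpace 𝔸]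

theorem bmv_slope_lemma {E : Type*} [NormedAddCommGroup E] [NormedSpace ℝ E]
    {f Φ : ℝ → E} {z : ℝ} (h : ∀ w, f w = f z + (w - z) • Φ w)
    (hΦ : ContinuousAt Φ z) : HasDerivAt f (Φ z) z := by
  rw [hasDerivAt_iff_tendsto_slope]
  apply Filter.Tendsto.congr' _ (hΦ.tendsto.mono_left nhdsWithin_le_nhds)
  filter_upwards [self_mem_nhdsWithin] with w hw
  have hwz : w - z ≠ 0 := sub_ne_zero.2 hw
  simp [slope_def_module, h w, smul_smul, inv_mul_cancel₀ hwz]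

/-- Duhamel's formula. -/
theorem bmv_duhamel (X Y : 𝔸) :
    exp X - exp Y
      = ∫ s in (0:ℝ)..1, exp (s • X) * (X - Y) * exp ((1 - s) • Y) := by
  have h1 : ∀ s : ℝ, HasDerivAt (fun t : ℝ => exp (t • X)) (exp (s • X) * X) s :=
    fun s => hasDerivAt_exp_smul_const X s
  have h2 : ∀ s : ℝ, HasDerivAt (fun t : ℝ => exp ((1 - t) • Y))
      (-(exp ((1 - s) • Y) * Y)) s := by
    intro s
    have hin : HasDerivAt (fun t : ℝ => 1 - t) (-1) s := by
      simpa using (hasDerivAt_id s).const_sub 1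
    have := (hasDerivAt_exp_smul_const Y (1 - s)).scomp s hin
    simpa [neg_smul, Function.comp_def] using this
  have hG : ∀ s : ℝ, HasDerivAt (fun t : ℝ => exp (t • X) * exp ((1 - t) • Y))
      (exp (s • X) * (X - Y) * exp ((1 - s) • Y)) s := by
    intro s
    have := (h1 s).mul (h2 s)
    have hc : Commute (exp ((1 - s) • Y)) Y :=
      (((Commute.refl Y).smul_left (1 - s)).exp_left)
    convert this using 1
    · rfl
    rw [hc.eq]
    noncomm_ring
  have hcont : Continuous fun s : ℝ => exp (s • X) * (X - Y) * exp ((1 - s) • Y) := by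
    exact ((exp_continuous.comp (continuous_id.smul continuous_const)).mul continuous_const).mul
      (exp_continuous.comp ((continuous_const.sub continuous_id).smul continuous_const))
  have := intervalIntegral.integral_eq_sub_of_hasDerivAt
    (f := fun t : ℝ => exp (t • X) * exp ((1 - t) • Y)) (fun s _ => hG s)
    (hcont.intervalIntegrable 0 1)
  rw [this]
  simp [exp_zero]

/-- Derivative of `exp` along the affine path `A - w • B`. -/
theorem bmv_exp_path (A B : 𝔸) (z : ℝ) :
    HasDerivAt (fun w : ℝ => exp (A - w • B))
      (-(∫ s in (0:ℝ)..1,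
          exp (s • (A - z • B)) * B * exp ((1 - s) • (A - z • B)))) z := by
  apply bmv_slope_lemma
    (Φ := fun w => -(∫ s in (0:ℝ)..1,
      exp (s • (A - w • B)) * B * exp ((1 - s) • (A - z • B))))
  · intro w
    have hd := bmv_duhamel (A - w • B) (A - z • B)
    have hMM : (A - w • B) - (A - z • B) = (z - w) • B := by
      rw [sub_smul]; abel
    rw [hMM] at hd
    have : (∫ s in (0:ℝ)..1,
        exp (s • (A - w • B)) * ((z - w) • B) * exp ((1 - s) • (A - z • B)))
        = (z - w) • ∫ s in (0:ℝ)..1,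
            exp (s • (A - w • B)) * B * exp ((1 - s) • (A - z • B)) := by
      rw [← intervalIntegral.integral_smul]
      congr 1; funext s
      rw [mul_smul_comm, smul_mul_assoc]
    rw [this] at hd
    have := sub_eq_iff_eq_add'.mp hd
    rw [this]
    rw [smul_neg, ← neg_smul, neg_sub]
  · apply Continuous.continuousAt
    apply Continuous.neg
    apply continuous_parametric_intervalIntegral_of_continuous'
    exact ((exp_continuous.comp (continuous_snd.smul
        (continuous_const.sub (continuous_fst.smul continuous_const)))).mul
        continuous_const).mul
      (exp_continuous.comp ((continuous_const.sub continuous_snd).smul continuous_const))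

end BMVAbstract

section BMVMatrix

open intervalIntegral

variable {d : ℕ} (A B : Matrix (Fin d) (Fin d) ℂ)

theorem bmv_coe_smul (w : ℝ) (C : Matrix (Fin d) (Fin d) ℂ) : (w : ℂ) • C = w • C := by
  ext i j
  simp [Matrix.smul_apply, Complex.coe_smul]

theorem bmv_exp_RC (x : Matrix (Fin d) (Fin d) ℂ) : exp x = exp x := by
  rfl

attribute [local instance] Matrix.linftyOpNormedRing Matrix.linftyOpNormedAlgebra
attribute [-instance] instTopologicalSpaceMatrix
attribute [-instance] Matrix.instUniformSpace

/-- The trace as a continuous linear map. -/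
noncomputable def bmvTraceCLM : Matrix (Fin d) (Fin d) ℂ →L[ℂ] ℂ :=
  LinearMap.toContinuousLinearMap (Matrix.traceLinearMap (Fin d) ℂ ℂ)

@[simp] theorem bmvTraceCLM_apply (x : Matrix (Fin d) (Fin d) ℂ) :
    bmvTraceCLM x = x.trace := rfl

theorem bmv_hasDerivAt_trace_exp (z : ℝ) :
    HasDerivAt (fun w : ℝ => (exp (A - w • B)).trace)
      (-(B * exp (A - z • B)).trace) z := by
  have h := bmv_exp_path A B z
  have h2 := ((bmvTraceCLM (d := d)).restrictScalars ℝ).hasFDerivAt.comp_hasDerivAt z h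
  have hint : IntervalIntegrable
      (fun s : ℝ => exp (s • (A - z • B)) * B * exp ((1 - s) • (A - z • B)))
      MeasureTheory.volume 0 1 :=
    (((exp_continuous.comp (continuous_id.smul continuous_const)).mul continuous_const).mul
      (exp_continuous.comp ((continuous_const.sub continuous_id).smul
        continuous_const))).intervalIntegrable 0 1
  have h3 : (bmvTraceCLM (d := d))
      (-(∫ s in (0:ℝ)..1, exp (s • (A - z • B)) * B * exp ((1 - s) • (A - z • B))))
      = -(B * exp (A - z • B)).trace := by
    rw [map_neg, ← ContinuousLinearMap.intervalIntegral_comp_comm _ hint]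
    have : ∀ s : ℝ, (bmvTraceCLM (d := d))
        (exp (s • (A - z • B)) * B * exp ((1 - s) • (A - z • B)))
        = (B * exp (A - z • B)).trace := by
      intro s
      rw [bmvTraceCLM_apply, mul_assoc, Matrix.trace_mul_comm, mul_assoc,
        ← exp_add_of_commute
          (((Commute.refl (A - z • B)).smul_left (1 - s)).smul_right s),
        ← add_smul, sub_add_cancel, one_smul]
    rw [intervalIntegral.integral_congr
      (g := fun _ => (B * exp (A - z • B)).trace) (fun s _ => this s)]
    simp
  convert h2 using 1
  · rfl
  · rfl
  exact h3.symm

theorem bmv_hasDerivAt_trace_Bexp (z : ℝ) :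
    HasDerivAt (fun w : ℝ => (B * exp (A - w • B)).trace)
      (-(∫ s in (0:ℝ)..1,
        (B * (exp (s • (A - z • B)) * B * exp ((1 - s) • (A - z • B)))).trace)) z := by
  have h := bmv_exp_path A B z
  set L : Matrix (Fin d) (Fin d) ℂ →L[ℂ] ℂ :=
    (bmvTraceCLM (d := d)).comp (ContinuousLinearMap.mul ℂ (Matrix (Fin d) (Fin d) ℂ) B) with hL
  have h2 := (L.restrictScalars ℝ).hasFDerivAt.comp_hasDerivAt z h
  have hint : IntervalIntegrable
      (fun s : ℝ => exp (s • (A - z • B)) * B * exp ((1 - s) • (A - z • B)))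
      MeasureTheory.volume 0 1 :=
    (((exp_continuous.comp (continuous_id.smul continuous_const)).mul continuous_const).mul
      (exp_continuous.comp ((continuous_const.sub continuous_id).smul
        continuous_const))).intervalIntegrable 0 1
  have h3 : L (-(∫ s in (0:ℝ)..1,
      exp (s • (A - z • B)) * B * exp ((1 - s) • (A - z • B))))
      = -(∫ s in (0:ℝ)..1,
        (B * (exp (s • (A - z • B)) * B * exp ((1 - s) • (A - z • B)))).trace) := by
    rw [map_neg, ← ContinuousLinearMap.intervalIntegral_comp_comm _ hint]
    rfl
  convert h2 using 1
  · rfl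
  · rfl
  exact h3.symm

set_option maxHeartbeats 1000000 in
theorem bmv_rhs_swap (z : ℝ) :
    ((Matrix.of fun i j => ∫ s in (0:ℝ)..1,
        ((exp (-(s • (A - z • B))) * B * exp (s • (A - z • B)) * B) i j)) *
      exp (A - z • B)).trace
    = ∫ s in (0:ℝ)..1,
        (B * (exp (s • (A - z • B)) * B * exp ((1 - s) • (A - z • B)))).trace := by
  set M := A - z • B with hM
  set F : ℝ → Matrix (Fin d) (Fin d) ℂ :=
    fun s => exp (-(s • M)) * B * exp (s • M) * B with hF
  have hFc : Continuous F := by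
    apply Continuous.mul _ continuous_const
    apply Continuous.mul _ (exp_continuous.comp (continuous_id.smul continuous_const))
    exact Continuous.mul
      (exp_continuous.comp
        ((continuous_id.smul (continuous_const : Continuous fun _ : ℝ => M)).neg))
      continuous_const
  have hInt : ∀ i j : Fin d, IntervalIntegrable
      (fun s => F s i j * exp M j i) MeasureTheory.volume 0 1 :=
    fun i j => ((hFc.matrix_elem i j).mul continuous_const).intervalIntegrable 0 1
  calc ((Matrix.of fun i j => ∫ s in (0:ℝ)..1, F s i j) * exp M).trace
      = ∑ i, ∑ j, (∫ s in (0:ℝ)..1, F s i j) * exp M j i := by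
        simp [Matrix.trace, Matrix.mul_apply, Matrix.diag]
    _ = ∑ i, ∑ j, ∫ s in (0:ℝ)..1, F s i j * exp M j i := by
        congr 1; funext i; congr 1; funext j
        exact (intervalIntegral.integral_mul_const _ _).symm
    _ = ∑ i, ∫ s in (0:ℝ)..1, ∑ j, F s i j * exp M j i := by
        congr 1; funext i
        exact (intervalIntegral.integral_finset_sum (fun j _ => hInt i j)).symm
    _ = ∫ s in (0:ℝ)..1, ∑ i, ∑ j, F s i j * exp M j i := by
        refine (intervalIntegral.integral_finset_sum (fun i _ => ?_)).symm
        exact (continuous_finset_sum _ fun j _ =>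
          (hFc.matrix_elem i j).mul continuous_const).intervalIntegrable 0 1
    _ = ∫ s in (0:ℝ)..1, (F s * exp M).trace := by
        congr 1
    _ = ∫ s in (0:ℝ)..1,
        (B * (exp (s • M) * B * exp ((1 - s) • M))).trace := by
        congr 1; funext s
        have h1 : F s * exp M = exp (-(s • M)) * (B * exp (s • M) * B * exp M) := by
          rw [hF]; noncomm_ring
        have h2 : exp M * exp (-(s • M)) = exp ((1 - s) • M) := by
          rw [← exp_add_of_commute (((Commute.refl M).smul_right s).neg_right)]
          congr 1
          rw [sub_smul, one_smul, sub_eq_add_neg]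
        rw [h1, Matrix.trace_mul_comm, mul_assoc, mul_assoc, mul_assoc, h2]
        congr 1
        noncomm_ring

theorem bmv_core (z : ℝ) :
    deriv (deriv (fun z : ℝ => (exp (A - (z : ℂ) • B)).trace)) z
      = ((Matrix.of fun i j =>
          ∫ s in (0:ℝ)..1,
            ((exp (-((s : ℂ) • (A - (z : ℂ) • B))) * B *
              exp ((s : ℂ) • (A - (z : ℂ) • B)) * B) i j)) *
          exp (A - (z : ℂ) • B)).trace := by
  have hfun : (fun w : ℝ => (exp (A - (w : ℂ) • B)).trace)
      = fun w : ℝ => (exp (A - w • B)).trace := by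
    funext w; rw [bmv_coe_smul]
  rw [hfun]
  have h1 : deriv (fun w : ℝ => (exp (A - w • B)).trace)
      = fun w => -(B * exp (A - w • B)).trace :=
    funext fun w => (bmv_hasDerivAt_trace_exp A B w).deriv
  rw [h1]
  have h2 : HasDerivAt (fun w : ℝ => -(B * exp (A - w • B)).trace)
      (∫ s in (0:ℝ)..1,
        (B * (exp (s • (A - z • B)) * B * exp ((1 - s) • (A - z • B)))).trace) z := by
    simpa [Pi.neg_def] using (bmv_hasDerivAt_trace_Bexp A B z).neg
  rw [h2.deriv]
  rw [← bmv_rhs_swap A B z]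
  simp only [bmv_exp_RC, bmv_coe_smul]

end BMVMatrix

theorem bmv_second_deriv_trace_exp (d : ℕ) (hd : 1 ≤ d)
    (A B : Matrix (Fin d) (Fin d) ℂ)
    (hA : A.IsHermitian) (hB : B.PosSemidef) :
    ∀ z : ℝ, 0 ≤ z →
      deriv (deriv (fun z : ℝ => (exp (A - (z : ℂ) • B)).trace)) z
        = ((Matrix.of fun i j =>
            ∫ s in (0:ℝ)..1,
              ((exp (-((s : ℂ) • (A - (z : ℂ) • B))) * B *
                exp ((s : ℂ) • (A - (z : ℂ) • B)) * B) i j)) *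
            exp (A - (z : ℂ) • B)).trace := by
  exact fun z _ => bmv_core A B z
end

section
/- Let d ≥ 1 and let A and B be complex hermitian d×d matrices with B positive semidefinite. Then for every real z ≥ 0 the second derivative of z ↦ tr(exp(A − zB)) is nonnegative: (d²/dz²) tr(exp(A − zB)) ≥ 0. -/
open Matrix NormedSpace
open scoped ComplexOrder
open scoped Nat

namespace BMVAux

/-! ### Real scalar series -/

noncomputable def aser (n : ℕ) (x y : ℝ) : ℝ :=
  ((n ! : ℝ))⁻¹ * n * ∑ k ∈ Finset.range (n - 1), x ^ k * y ^ (n - 2 - k)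

noncomputable def wser (n : ℕ) (c : ℝ) : ℝ :=
  ((n ! : ℝ))⁻¹ * n * ((n - 1 : ℕ) : ℝ) * c ^ (n - 2)

theorem abs_aser_le (n : ℕ) (x y : ℝ) :
    |aser n x y| ≤ wser n (max |x| |y|) := by
  set c := max |x| |y| with hc
  have hc0 : 0 ≤ c := le_trans (abs_nonneg x) (le_max_left _ _)
  rw [aser, wser, abs_mul, abs_mul]
  have e1 : |((n ! : ℝ))⁻¹| = ((n ! : ℝ))⁻¹ := abs_of_nonneg (by positivity)
  have e2 : |(n : ℝ)| = (n : ℝ) := abs_of_nonneg (by positivity)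
  rw [e1, e2, mul_assoc (((n ! : ℝ))⁻¹ * n)]
  refine mul_le_mul_of_nonneg_left ?_ (by positivity)
  refine (Finset.abs_sum_le_sum_abs _ _).trans ?_
  have hterm : ∀ k ∈ Finset.range (n - 1), |x ^ k * y ^ (n - 2 - k)| ≤ c ^ (n - 2) := by
    intro k hk
    rw [Finset.mem_range] at hk
    rw [abs_mul, abs_pow, abs_pow]
    calc |x| ^ k * |y| ^ (n - 2 - k) ≤ c ^ k * c ^ (n - 2 - k) := by
          exact mul_le_mul (pow_le_pow_left₀ (abs_nonneg x) (le_max_left _ _) k)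
            (pow_le_pow_left₀ (abs_nonneg y) (le_max_right _ _) _) (by positivity) (by positivity)
      _ = c ^ (n - 2) := by rw [← pow_add]; congr 1; omega
  refine (Finset.sum_le_sum hterm).trans ?_
  rw [Finset.sum_const, Finset.card_range, nsmul_eq_mul]

theorem summable_wser (c : ℝ) : Summable (fun n => wser n c) := by
  apply (summable_nat_add_iff 2).mp
  have : (fun n => wser (n + 2) c) = fun n => c ^ n / (n ! : ℝ) := by
    funext n
    rw [wser]
    have h1 : (n + 2)! = (n + 2) * ((n + 1) * n !) := by
      rw [Nat.factorial_succ, Nat.factorial_succ]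
    rw [h1]
    push_cast
    have hn : (n ! : ℝ) ≠ 0 := by positivity
    field_simp
  rw [this]
  exact Real.summable_pow_div_factorial c

theorem summable_aser (x y : ℝ) : Summable (fun n => aser n x y) :=
  Summable.of_norm_bounded (summable_wser _)
    (fun n => by rw [Real.norm_eq_abs]; exact abs_aser_le n x y)

theorem real_exp_tsum (x : ℝ) : Real.exp x = ∑' n, x ^ n / (n ! : ℝ) := by
  rw [Real.exp_eq_exp_ℝ, NormedSpace.exp_eq_tsum_div]

theorem aser_zero (x y : ℝ) : aser 0 x y = 0 := by simp [aser]
theorem aser_one (x y : ℝ) : aser 1 x y = 0 := by simp [aser]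

theorem fact_ratio (n : ℕ) : (((n+2)! : ℝ))⁻¹ * ((n:ℝ)+2) * ((n:ℝ)+1) = ((n ! : ℝ))⁻¹ := by
  have h1 : ((n + 2)! : ℝ) = ((n:ℝ) + 2) * (((n:ℝ) + 1) * (n ! : ℝ)) := by
    rw [Nat.factorial_succ, Nat.factorial_succ]; push_cast; ring
  have hn : (n ! : ℝ) ≠ 0 := by positivity
  rw [h1]
  field_simp

theorem aser_same (n : ℕ) (x : ℝ) : aser (n + 2) x x = x ^ n / (n ! : ℝ) := by
  rw [aser]
  have h : ∀ k ∈ Finset.range (n + 2 - 1), x ^ k * x ^ (n + 2 - 2 - k) = x ^ n := by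
    intro k hk
    rw [Finset.mem_range] at hk
    rw [← pow_add]
    congr 1
    omega
  rw [Finset.sum_congr rfl h, Finset.sum_const, Finset.card_range, nsmul_eq_mul]
  push_cast
  calc ((((n:ℕ)+2)! : ℝ))⁻¹ * ((n:ℝ) + 2) * (((n:ℝ) + 1) * x ^ n)
      = ((((n:ℕ)+2)! : ℝ))⁻¹ * ((n:ℝ) + 2) * ((n:ℝ) + 1) * x ^ n := by ring
    _ = ((n ! : ℝ))⁻¹ * x ^ n := by rw [fact_ratio]
    _ = x ^ n / (n ! : ℝ) := by ring

theorem tsum_aser_same (x : ℝ) : ∑' n, aser n x x = Real.exp x := by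
  have hsum := summable_aser x x
  rw [Summable.tsum_eq_zero_add hsum, Summable.tsum_eq_zero_add ((summable_nat_add_iff 1).mpr hsum)]
  simp only [aser_zero, aser_one, zero_add]
  rw [real_exp_tsum]
  exact tsum_congr fun n => aser_same n x

theorem aser_geom (n : ℕ) (x y : ℝ) :
    aser n x y * (x - y) = ((n ! : ℝ))⁻¹ * n * (x ^ (n-1) - y ^ (n-1)) := by
  have h2 : (∑ k ∈ Finset.range (n-1), x ^ k * y ^ (n - 2 - k)) * (x - y)
      = x ^ (n-1) - y ^ (n-1) := by
    simp only [show ∀ k : ℕ, n - 2 - k = n - 1 - 1 - k from fun k => by omega]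
    exact geom_sum₂_mul x y (n - 1)
  rw [aser, mul_assoc (((n ! : ℝ))⁻¹ * (n:ℝ)), h2]

theorem bser_shift (x : ℝ) :
    (fun n : ℕ => (((n+1)! : ℝ))⁻¹ * ((n:ℕ)+1 : ℕ) * x ^ ((n+1)-1)) = fun n => x ^ n / (n ! : ℝ) := by
  funext n
  have hn : (n ! : ℝ) ≠ 0 := by positivity
  rw [Nat.factorial_succ]
  push_cast
  field_simp

theorem summable_bser (x : ℝ) : Summable (fun n : ℕ => ((n ! : ℝ))⁻¹ * n * x ^ (n-1)) := by
  apply (summable_nat_add_iff 1).mp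
  simp only [bser_shift]
  exact Real.summable_pow_div_factorial x

theorem tsum_bser (x : ℝ) : ∑' n : ℕ, ((n ! : ℝ))⁻¹ * n * x ^ (n-1) = Real.exp x := by
  rw [Summable.tsum_eq_zero_add (summable_bser x)]
  simp only [Nat.cast_zero, mul_zero, zero_mul, zero_add]
  rw [real_exp_tsum]
  refine tsum_congr fun n => ?_
  have := congrFun (bser_shift x) n
  simpa using this

theorem tsum_aser_ne (x y : ℝ) (hxy : x ≠ y) :
    (∑' n, aser n x y) * (x - y) = Real.exp x - Real.exp y := by
  rw [← tsum_mul_right]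
  have h1 : ∀ n : ℕ, aser n x y * (x - y)
      = ((n ! : ℝ))⁻¹ * n * x ^ (n-1) - ((n ! : ℝ))⁻¹ * n * y ^ (n-1) := by
    intro n
    rw [aser_geom]
    ring
  calc ∑' n, aser n x y * (x - y)
      = ∑' n, (((n ! : ℝ))⁻¹ * n * x ^ (n-1) - ((n ! : ℝ))⁻¹ * n * y ^ (n-1)) :=
        tsum_congr h1
    _ = (∑' n, ((n ! : ℝ))⁻¹ * n * x ^ (n-1)) - ∑' n, ((n ! : ℝ))⁻¹ * n * y ^ (n-1) :=
        Summable.tsum_sub (summable_bser x) (summable_bser y)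
    _ = Real.exp x - Real.exp y := by rw [tsum_bser, tsum_bser]

theorem tsum_aser_nonneg (x y : ℝ) : 0 ≤ ∑' n, aser n x y := by
  rcases eq_or_ne x y with h | h
  · subst h; rw [tsum_aser_same]; positivity
  · have hne : x - y ≠ 0 := sub_ne_zero.mpr h
    have := tsum_aser_ne x y h
    have hK : (∑' n, aser n x y) = (Real.exp x - Real.exp y) / (x - y) := by
      field_simp at this ⊢
      linarith [this]
    rw [hK]
    rcases lt_or_gt_of_ne h with hlt | hgt
    · refine div_nonneg_iff.mpr (Or.inr ⟨?_, by linarith⟩)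
      simp [Real.exp_le_exp.mpr hlt.le]
    · apply div_nonneg
      · simp [Real.exp_le_exp.mpr hgt.le]
      · linarith

/-! ### Matrix series functions (statements instance-clean) -/

variable {d : ℕ}

noncomputable def g0 (A B : Matrix (Fin d) (Fin d) ℂ) (n : ℕ) : ℝ → ℂ :=
  fun y => ((n ! : ℂ))⁻¹ * ((A - (y:ℂ) • B) ^ n).trace

noncomputable def g1 (A B : Matrix (Fin d) (Fin d) ℂ) (n : ℕ) : ℝ → ℂ :=
  fun y => -(((n ! : ℂ))⁻¹ * n * (B * (A - (y:ℂ) • B) ^ (n - 1)).trace)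

noncomputable def g2 (A B : Matrix (Fin d) (Fin d) ℂ) (n : ℕ) : ℝ → ℂ :=
  fun y => ((n ! : ℂ))⁻¹ * n *
    ∑ k ∈ Finset.range (n - 1),
      (B * (A - (y:ℂ) • B) ^ k * B * (A - (y:ℂ) • B) ^ (n - 2 - k)).trace

section NormedSection

attribute [local instance] Matrix.linftyOpNormedAddCommGroup Matrix.linftyOpNormedRing
  Matrix.linftyOpNormedAlgebra

noncomputable def traceCLM (d : ℕ) : Matrix (Fin d) (Fin d) ℂ →L[ℝ] ℂ :=
  LinearMap.toContinuousLinearMap ((Matrix.traceLinearMap (Fin d) ℂ ℂ).restrictScalars ℝ)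

@[simp] theorem traceCLM_apply (X : Matrix (Fin d) (Fin d) ℂ) : traceCLM d X = X.trace := rfl

theorem entry_le {X : Matrix (Fin d) (Fin d) ℂ} (i j : Fin d) : ‖X i j‖ ≤ ‖X‖ := by
  have h1 : ‖X i j‖₊ ≤ ∑ k : Fin d, ‖X i k‖₊ :=
    Finset.single_le_sum (f := fun k => ‖X i k‖₊) (fun k _ => zero_le) (Finset.mem_univ j)
  have h2 : (∑ k : Fin d, ‖X i k‖₊) ≤ ‖X‖₊ := by
    rw [Matrix.linfty_opNNNorm_def]
    exact Finset.le_sup (f := fun i => ∑ k : Fin d, ‖X i k‖₊) (Finset.mem_univ i)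
  exact_mod_cast h1.trans h2

theorem trace_le (X : Matrix (Fin d) (Fin d) ℂ) : ‖X.trace‖ ≤ d * ‖X‖ := by
  refine (norm_sum_le _ _).trans ?_
  calc ∑ i : Fin d, ‖X i i‖ ≤ ∑ _i : Fin d, ‖X‖ :=
        Finset.sum_le_sum fun i _ => entry_le i i
    _ = d * ‖X‖ := by simp [Finset.sum_const, nsmul_eq_mul]

theorem hasDerivAt_M (A B : Matrix (Fin d) (Fin d) ℂ) (z : ℝ) :
    HasDerivAt (fun y : ℝ => A - (y:ℂ) • B) (-B) z := by
  have h : ∀ y : ℝ, A - (y:ℂ) • B = A - y • B := fun y => by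
    rw [← algebraMap_smul ℂ y B]; norm_num
  simp_rw [h]
  have h2 := ((hasDerivAt_id z).smul_const B).const_sub A
  simp only [id, one_smul] at h2
  exact h2

theorem hasDerivAt_Mpow (A B : Matrix (Fin d) (Fin d) ℂ) (n : ℕ) (z : ℝ) :
    HasDerivAt (fun y : ℝ => (A - (y:ℂ) • B) ^ n)
      (-∑ k ∈ Finset.range n,
        (A - (z:ℂ) • B) ^ k * B * (A - (z:ℂ) • B) ^ (n - 1 - k)) z := by
  induction n with
  | zero =>
    simp only [pow_zero, Finset.range_zero, Finset.sum_empty, neg_zero]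
    exact hasDerivAt_const z _
  | succ n ih =>
    have h := ih.mul (hasDerivAt_M A B z)
    simp_rw [Pi.mul_def, ← pow_succ] at h
    refine h.congr_deriv ?_
    rw [Finset.sum_range_succ]
    set M := A - (z:ℂ) • B
    have h1 : ∀ k ∈ Finset.range n, M ^ k * B * M ^ (n + 1 - 1 - k) =
        M ^ k * B * M ^ (n - 1 - k) * M := by
      intro k hk
      rw [Finset.mem_range] at hk
      have : n + 1 - 1 - k = (n - 1 - k) + 1 := by omega
      rw [this, pow_succ, ← mul_assoc]
    rw [Finset.sum_congr rfl h1]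
    rw [show n + 1 - 1 - n = 0 from by omega]
    simp [Finset.sum_mul, neg_add, mul_neg]
    abel

theorem trace_collapse (A B : Matrix (Fin d) (Fin d) ℂ) (z : ℝ) (n : ℕ) :
    (∑ k ∈ Finset.range n,
        (A - (z:ℂ) • B) ^ k * B * (A - (z:ℂ) • B) ^ (n - 1 - k)).trace
      = (n : ℂ) * (B * (A - (z:ℂ) • B) ^ (n - 1)).trace := by
  set M := A - (z:ℂ) • B
  rw [Matrix.trace_sum]
  have h : ∀ k ∈ Finset.range n, (M ^ k * B * M ^ (n - 1 - k)).trace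
      = (B * M ^ (n - 1)).trace := by
    intro k hk
    rw [Finset.mem_range] at hk
    rw [mul_assoc, Matrix.trace_mul_comm, mul_assoc, ← pow_add]
    have he : n - 1 - k + k = n - 1 := by omega
    rw [he]
  rw [Finset.sum_congr rfl h, Finset.sum_const, Finset.card_range, nsmul_eq_mul]

theorem hasDerivAt_trace_pow (A B : Matrix (Fin d) (Fin d) ℂ) (n : ℕ) (z : ℝ) :
    HasDerivAt (fun y : ℝ => ((A - (y:ℂ) • B) ^ n).trace)
      (-((n : ℂ) * (B * (A - (z:ℂ) • B) ^ (n - 1)).trace)) z := by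
  have h := (traceCLM d).hasFDerivAt.comp_hasDerivAt z (hasDerivAt_Mpow A B n z)
  simp only [Function.comp_def, traceCLM_apply] at h
  refine h.congr_deriv ?_
  change Matrix.trace (-∑ k ∈ Finset.range n,
    (A - (z:ℂ) • B) ^ k * B * (A - (z:ℂ) • B) ^ (n - 1 - k)) = _
  rw [Matrix.trace_neg, trace_collapse]

theorem hasDerivAt_trace_Bpow (A B : Matrix (Fin d) (Fin d) ℂ) (m : ℕ) (z : ℝ) :
    HasDerivAt (fun y : ℝ => (B * (A - (y:ℂ) • B) ^ m).trace)
      (-∑ k ∈ Finset.range m,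
        (B * (A - (z:ℂ) • B) ^ k * B * (A - (z:ℂ) • B) ^ (m - 1 - k)).trace) z := by
  have h1 := (hasDerivAt_const (𝕜 := ℝ) z B).mul (hasDerivAt_Mpow A B m z)
  have h := (traceCLM d).hasFDerivAt.comp_hasDerivAt z h1
  simp only [Function.comp_def, Pi.mul_apply, traceCLM_apply] at h
  refine h.congr_deriv ?_
  change Matrix.trace (0 * (A - (z:ℂ) • B) ^ m + B * -∑ k ∈ Finset.range m,
    (A - (z:ℂ) • B) ^ k * B * (A - (z:ℂ) • B) ^ (m - 1 - k)) = _
  simp [Matrix.trace_neg, Finset.mul_sum, Matrix.trace_sum, mul_assoc]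

theorem hasDerivAt_g0 (A B : Matrix (Fin d) (Fin d) ℂ) (n : ℕ) (z : ℝ) :
    HasDerivAt (g0 A B n) (g1 A B n z) z := by
  have h := (hasDerivAt_trace_pow A B n z).const_mul (((n ! : ℂ))⁻¹)
  refine h.congr_deriv ?_
  simp only [g1]
  ring

theorem hasDerivAt_g1 (A B : Matrix (Fin d) (Fin d) ℂ) (n : ℕ) (z : ℝ) :
    HasDerivAt (g1 A B n) (g2 A B n z) z := by
  have h := ((hasDerivAt_trace_Bpow A B (n-1) z).const_mul
    (((n ! : ℂ))⁻¹ * n)).neg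
  refine h.congr_deriv ?_
  simp only [g2, mul_neg, neg_neg, Finset.mul_sum]
  refine Finset.sum_congr rfl fun k hk => ?_
  rw [show n - 1 - 1 - k = n - 2 - k from by omega]

theorem norm_M_le (A B : Matrix (Fin d) (Fin d) ℂ) {R y : ℝ} (hy : |y| ≤ R) :
    ‖A - (y:ℂ) • B‖ ≤ ‖A‖ + R * ‖B‖ := by
  refine (norm_sub_le _ _).trans ?_
  rw [norm_smul, Complex.norm_real, Real.norm_eq_abs]
  exact add_le_add_right (mul_le_mul_of_nonneg_right hy (norm_nonneg B)) ‖A‖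

theorem norm_Mpow_le (hd : 0 < d) (A B : Matrix (Fin d) (Fin d) ℂ) {R y : ℝ} (hy : |y| ≤ R)
    (k : ℕ) : ‖(A - (y:ℂ) • B) ^ k‖ ≤ (‖A‖ + R * ‖B‖) ^ k := by
  haveI : Nonempty (Fin d) := ⟨⟨0, hd⟩⟩
  have hR : (0:ℝ) ≤ R := le_trans (abs_nonneg y) hy
  rcases Nat.eq_zero_or_pos k with hk | hk
  · subst hk; simp
  calc ‖(A - (y:ℂ) • B) ^ k‖ ≤ ‖A - (y:ℂ) • B‖ ^ k := norm_pow_le' _ hk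
    _ ≤ (‖A‖ + R * ‖B‖) ^ k := pow_le_pow_left₀ (norm_nonneg _) (norm_M_le A B hy) k

theorem norm_g1_le (hd : 0 < d) (A B : Matrix (Fin d) (Fin d) ℂ) {R y : ℝ} (hy : |y| ≤ R)
    (n : ℕ) : ‖g1 A B n y‖ ≤ (d:ℝ) * ‖B‖ * (((n ! : ℝ))⁻¹ * n * (‖A‖ + R * ‖B‖) ^ (n-1)) := by
  set c := ‖A‖ + R * ‖B‖ with hc
  have hc0 : (0:ℝ) ≤ c := by
    have hR : (0:ℝ) ≤ R := le_trans (abs_nonneg y) hy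
    positivity
  rw [g1, norm_neg, norm_mul, norm_mul]
  have e1 : ‖((n ! : ℂ))⁻¹‖ = ((n ! : ℝ))⁻¹ := by rw [norm_inv]; norm_num
  have e2 : ‖((n : ℕ) : ℂ)‖ = (n : ℝ) := by norm_num
  rw [e1, e2]
  have h1 : ‖(B * (A - (y:ℂ) • B) ^ (n-1)).trace‖ ≤ (d:ℝ) * (‖B‖ * c ^ (n-1)) := by
    refine (trace_le _).trans ?_
    refine mul_le_mul_of_nonneg_left ?_ (by positivity)
    exact (norm_mul_le _ _).trans
      (mul_le_mul_of_nonneg_left (norm_Mpow_le hd A B hy (n-1)) (norm_nonneg B))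
  calc ((n ! : ℝ))⁻¹ * (n:ℝ) * ‖(B * (A - (y:ℂ) • B) ^ (n-1)).trace‖
      ≤ ((n ! : ℝ))⁻¹ * (n:ℝ) * ((d:ℝ) * (‖B‖ * c ^ (n-1))) :=
        mul_le_mul_of_nonneg_left h1 (by positivity)
    _ = (d:ℝ) * ‖B‖ * (((n ! : ℝ))⁻¹ * n * c ^ (n-1)) := by ring

theorem norm_g2_le (hd : 0 < d) (A B : Matrix (Fin d) (Fin d) ℂ) {R y : ℝ} (hy : |y| ≤ R)
    (n : ℕ) : ‖g2 A B n y‖ ≤ (d:ℝ) * (‖B‖ * ‖B‖) * wser n (‖A‖ + R * ‖B‖) := by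
  set c := ‖A‖ + R * ‖B‖ with hc
  have hR : (0:ℝ) ≤ R := le_trans (abs_nonneg y) hy
  have hc0 : (0:ℝ) ≤ c := by positivity
  rw [g2, norm_mul, norm_mul]
  have e1 : ‖((n ! : ℂ))⁻¹‖ = ((n ! : ℝ))⁻¹ := by rw [norm_inv]; norm_num
  have e2 : ‖((n : ℕ) : ℂ)‖ = (n : ℝ) := by norm_num
  rw [e1, e2]
  set M := A - (y:ℂ) • B with hM
  have hterm : ∀ k ∈ Finset.range (n-1),
      ‖(B * M ^ k * B * M ^ (n - 2 - k)).trace‖ ≤ (d:ℝ) * (‖B‖ * ‖B‖ * c ^ (n-2)) := by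
    intro k hk
    rw [Finset.mem_range] at hk
    refine (trace_le _).trans ?_
    refine mul_le_mul_of_nonneg_left ?_ (by positivity)
    have h1 : ‖B * M ^ k * B * M ^ (n - 2 - k)‖
        ≤ ‖B‖ * c ^ k * ‖B‖ * c ^ (n - 2 - k) := by
      refine (norm_mul_le _ _).trans ?_
      have h2 : ‖B * M ^ k * B‖ ≤ ‖B‖ * c ^ k * ‖B‖ := by
        refine (norm_mul_le _ _).trans ?_
        refine mul_le_mul_of_nonneg_right ?_ (norm_nonneg B)
        exact (norm_mul_le _ _).trans
          (mul_le_mul_of_nonneg_left (norm_Mpow_le hd A B hy k) (norm_nonneg B))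
      exact mul_le_mul h2 (norm_Mpow_le hd A B hy _) (norm_nonneg _) (by positivity)
    refine h1.trans ?_
    have : ‖B‖ * c ^ k * ‖B‖ * c ^ (n - 2 - k) = ‖B‖ * ‖B‖ * (c ^ k * c ^ (n - 2 - k)) := by
      ring
    rw [this, ← pow_add, show k + (n - 2 - k) = n - 2 from by omega]
  have hsum : ‖∑ k ∈ Finset.range (n-1),
      (B * M ^ k * B * M ^ (n - 2 - k)).trace‖
      ≤ ((n-1 : ℕ):ℝ) * ((d:ℝ) * (‖B‖ * ‖B‖ * c ^ (n-2))) := by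
    refine (norm_sum_le _ _).trans ?_
    refine (Finset.sum_le_sum hterm).trans ?_
    rw [Finset.sum_const, Finset.card_range, nsmul_eq_mul]
  calc ((n ! : ℝ))⁻¹ * (n:ℝ) * ‖∑ k ∈ Finset.range (n-1),
        (B * M ^ k * B * M ^ (n - 2 - k)).trace‖
      ≤ ((n ! : ℝ))⁻¹ * (n:ℝ) * (((n-1 : ℕ):ℝ) * ((d:ℝ) * (‖B‖ * ‖B‖ * c ^ (n-2)))) :=
        mul_le_mul_of_nonneg_left hsum (by positivity)
    _ = (d:ℝ) * (‖B‖ * ‖B‖) * wser n c := by rw [wser]; ring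

theorem summable_g0 (A B : Matrix (Fin d) (Fin d) ℂ) (y : ℝ) :
    Summable (fun n => g0 A B n y) := by
  have h := NormedSpace.expSeries_summable' (𝕂 := ℂ) (A - (y:ℂ) • B)
  have h2 := h.map (traceCLM d) (traceCLM d).continuous
  refine h2.congr fun n => ?_
  simp only [Function.comp_apply, traceCLM_apply, Matrix.trace_smul, g0, smul_eq_mul]

theorem trace_exp_eq' (A B : Matrix (Fin d) (Fin d) ℂ) (y : ℝ) :
    (exp (A - (y:ℂ) • B)).trace = ∑' n, g0 A B n y := by
  have h := NormedSpace.expSeries_summable' (𝕂 := ℂ) (A - (y:ℂ) • B)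
  rw [exp_eq_tsum ℂ]
  calc (∑' n : ℕ, ((n ! : ℂ))⁻¹ • (A - (y:ℂ) • B) ^ n).trace
      = traceCLM d (∑' n : ℕ, ((n ! : ℂ))⁻¹ • (A - (y:ℂ) • B) ^ n) := rfl
    _ = ∑' n : ℕ, traceCLM d (((n ! : ℂ))⁻¹ • (A - (y:ℂ) • B) ^ n) := (traceCLM d).map_tsum h
    _ = ∑' n, g0 A B n y := by
        refine tsum_congr fun n => ?_
        simp only [traceCLM_apply, Matrix.trace_smul, g0, smul_eq_mul]

end NormedSection

theorem mem_ball_abs {y t : ℝ} (h : t ∈ Metric.ball (0:ℝ) (|y| + 1)) : |t| ≤ |y| + 1 := by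
  rw [Metric.mem_ball, dist_zero_right, Real.norm_eq_abs] at h
  exact h.le

theorem self_mem_ball (y : ℝ) : y ∈ Metric.ball (0:ℝ) (|y| + 1) := by
  rw [Metric.mem_ball, dist_zero_right, Real.norm_eq_abs]
  linarith [abs_nonneg y]

theorem hasDerivAt_sum1 (hd : 0 < d) (A B : Matrix (Fin d) (Fin d) ℂ) (y : ℝ) :
    HasDerivAt (fun t : ℝ => (exp (A - (t:ℂ) • B)).trace) (∑' n, g1 A B n y) y := by
  letI := Matrix.linftyOpNormedAddCommGroup (m := Fin d) (n := Fin d) (α := ℂ)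
  letI := Matrix.linftyOpNormedRing (n := Fin d) (α := ℂ)
  letI := Matrix.linftyOpNormedAlgebra (R := ℝ) (n := Fin d) (α := ℂ)
  have hfun : (fun t : ℝ => (exp (A - (t:ℂ) • B)).trace) = fun t => ∑' n, g0 A B n t :=
    funext fun t => trace_exp_eq' A B t
  rw [hfun]
  set R := |y| + 1 with hR
  set c := ‖A‖ + R * ‖B‖ with hc
  have hu : Summable (fun n => (d:ℝ) * ‖B‖ * (((n ! : ℝ))⁻¹ * n * c ^ (n-1))) :=
    (summable_bser c).mul_left _
  exact hasDerivAt_tsum_of_isPreconnected hu Metric.isOpen_ball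
    (convex_ball (0:ℝ) R).isPreconnected
    (fun n t _ => hasDerivAt_g0 A B n t)
    (fun n t ht => norm_g1_le hd A B (mem_ball_abs ht) n)
    (self_mem_ball y) (summable_g0 A B y) (self_mem_ball y)

theorem hasDerivAt_sum2 (hd : 0 < d) (A B : Matrix (Fin d) (Fin d) ℂ) (y : ℝ) :
    HasDerivAt (fun t : ℝ => ∑' n, g1 A B n t) (∑' n, g2 A B n y) y := by
  letI := Matrix.linftyOpNormedAddCommGroup (m := Fin d) (n := Fin d) (α := ℂ)
  letI := Matrix.linftyOpNormedRing (n := Fin d) (α := ℂ)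
  letI := Matrix.linftyOpNormedAlgebra (R := ℝ) (n := Fin d) (α := ℂ)
  set R := |y| + 1 with hR
  set c := ‖A‖ + R * ‖B‖ with hc
  have hu : Summable (fun n => (d:ℝ) * (‖B‖ * ‖B‖) * wser n c) :=
    (summable_wser c).mul_left _
  have hg0 : Summable (fun n => g1 A B n y) := by
    refine Summable.of_norm_bounded ((summable_bser c).mul_left ((d:ℝ) * ‖B‖)) ?_
    intro n
    exact norm_g1_le hd A B (le_of_lt (by rw [hR]; linarith [abs_nonneg y])) n
  exact hasDerivAt_tsum_of_isPreconnected hu Metric.isOpen_ball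
    (convex_ball (0:ℝ) R).isPreconnected
    (fun n t _ => hasDerivAt_g1 A B n t)
    (fun n t ht => norm_g2_le hd A B (mem_ball_abs ht) n)
    (self_mem_ball y) hg0 (self_mem_ball y)

theorem trace_CdCd (C : Matrix (Fin d) (Fin d) ℂ) (v w : Fin d → ℂ) :
    (C * Matrix.diagonal v * (C * Matrix.diagonal w)).trace
      = ∑ p, ∑ q, C p q * v q * C q p * w p := by
  have hentry : ∀ p, (C * Matrix.diagonal v * (C * Matrix.diagonal w)) p p
      = ∑ q, C p q * v q * (C q p * w p) := by
    intro p
    rw [Matrix.mul_apply]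
    refine Finset.sum_congr rfl fun q _ => ?_
    rw [Matrix.mul_diagonal, Matrix.mul_diagonal]
  rw [Matrix.trace]
  simp only [Matrix.diag]
  rw [Finset.sum_congr rfl (fun p _ => hentry p)]
  refine Finset.sum_congr rfl fun p _ => Finset.sum_congr rfl fun q _ => by ring

theorem tsum_g2_eq (A B : Matrix (Fin d) (Fin d) ℂ) (hA : A.IsHermitian)
    (hB : B.IsHermitian) (z : ℝ) :
    ∃ r : ℝ, 0 ≤ r ∧ ∑' n, g2 A B n z = (r : ℂ) := by
  have hBz : ((z:ℂ) • B).IsHermitian := by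
    unfold Matrix.IsHermitian
    rw [Matrix.conjTranspose_smul, hB.eq]
    simp [Complex.star_def, Complex.conj_ofReal]
  have hM : (A - (z:ℂ) • B).IsHermitian := hA.sub hBz
  set M := A - (z:ℂ) • B with hMdef
  set U : Matrix (Fin d) (Fin d) ℂ := ↑(hM.eigenvectorUnitary) with hU
  set lam : Fin d → ℝ := hM.eigenvalues with hlam
  have hU1 : star U * U = 1 := by
    exact_mod_cast Unitary.coe_star_mul_self hM.eigenvectorUnitary
  have hU2 : U * star U = 1 := by
    exact_mod_cast Unitary.coe_mul_star_self hM.eigenvectorUnitary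
  have hsU : ∀ X : Matrix (Fin d) (Fin d) ℂ, star U * (U * X) = X := fun X => by
    rw [← Matrix.mul_assoc, hU1, Matrix.one_mul]
  have hUs : ∀ X : Matrix (Fin d) (Fin d) ℂ, U * (star U * X) = X := fun X => by
    rw [← Matrix.mul_assoc, hU2, Matrix.one_mul]
  set D : Matrix (Fin d) (Fin d) ℂ := Matrix.diagonal (fun i => (lam i : ℂ)) with hD
  have hspec : M = U * D * star U := by
    have h := hM.spectral_theorem
    rw [Unitary.conjStarAlgAut_apply] at h
    exact h
  have hMk : ∀ k : ℕ, M ^ k = U * D ^ k * star U := by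
    intro k
    induction k with
    | zero => simp [hU2]
    | succ k ih =>
      rw [pow_succ, ih, hspec, pow_succ]
      simp only [Matrix.mul_assoc]
      rw [hsU]
  set C := star U * B * U with hC
  have hCh : Cᴴ = C := by
    rw [hC]
    simp [Matrix.star_eq_conjTranspose, Matrix.conjTranspose_mul, hB.eq, Matrix.mul_assoc]
  have hCstar : ∀ p q, C q p = (starRingEnd ℂ) (C p q) := by
    intro p q
    conv_lhs => rw [← hCh]
    rw [Matrix.conjTranspose_apply]
    rfl
  have key : ∀ k m : ℕ, (B * M ^ k * B * M ^ m).trace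
      = ∑ p, ∑ q, ((Complex.normSq (C p q) : ℂ)) * ((lam q : ℂ)) ^ k * ((lam p : ℂ)) ^ m := by
    intro k m
    have h1 : B * M ^ k * B * M ^ m = U * (C * D ^ k * (C * D ^ m)) * star U := by
      rw [hMk k, hMk m, hC]
      simp only [Matrix.mul_assoc, hsU, hUs]
    rw [h1]
    have h2 : (U * (C * D ^ k * (C * D ^ m)) * star U).trace
        = (C * D ^ k * (C * D ^ m)).trace := by
      rw [Matrix.trace_mul_comm, ← Matrix.mul_assoc, hU1, Matrix.one_mul]
    rw [h2, hD, Matrix.diagonal_pow, Matrix.diagonal_pow]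
    rw [show C * Matrix.diagonal ((fun i => (lam i : ℂ)) ^ k)
        * (C * Matrix.diagonal ((fun i => (lam i : ℂ)) ^ m))
        = C * Matrix.diagonal ((fun i => (lam i : ℂ)) ^ k)
        * (C * Matrix.diagonal ((fun i => (lam i : ℂ)) ^ m)) from rfl, trace_CdCd]
    refine Finset.sum_congr rfl fun p _ => Finset.sum_congr rfl fun q _ => ?_
    rw [hCstar p q, Pi.pow_apply, Pi.pow_apply]
    rw [show C p q * (lam q : ℂ) ^ k * ((starRingEnd ℂ) (C p q)) * (lam p : ℂ) ^ m
        = (C p q * (starRingEnd ℂ) (C p q)) * (lam q : ℂ) ^ k * (lam p : ℂ) ^ m from by ring]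
    rw [Complex.mul_conj]
  have hg2eq : ∀ n, g2 A B n z
      = ∑ p, ∑ q, ((Complex.normSq (C p q) : ℂ))
          * ((aser n (lam q) (lam p) : ℝ) : ℂ) := by
    intro n
    rw [g2]
    simp only [← hMdef, key]
    rw [Finset.sum_comm, Finset.mul_sum]
    refine Finset.sum_congr rfl fun p _ => ?_
    rw [Finset.sum_comm, Finset.mul_sum]
    refine Finset.sum_congr rfl fun q _ => ?_
    have hcast : ((aser n (lam q) (lam p) : ℝ) : ℂ)
        = ((n ! : ℂ))⁻¹ * n * ∑ k ∈ Finset.range (n-1),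
            ((lam q : ℂ)) ^ k * ((lam p : ℂ)) ^ (n-2-k) := by
      rw [aser]
      push_cast
      ring
    rw [hcast]
    simp only [Finset.mul_sum]
    exact Finset.sum_congr rfl fun k _ => by ring
  have hsumpq : ∀ p q : Fin d, Summable (fun n => ((Complex.normSq (C p q) : ℂ))
      * ((aser n (lam q) (lam p) : ℝ) : ℂ)) := by
    intro p q
    have h1 : Summable (fun n => ((aser n (lam q) (lam p) : ℝ) : ℂ)) :=
      ((summable_aser (lam q) (lam p)).map Complex.ofRealCLM Complex.ofRealCLM.continuous)
    exact h1.mul_left _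
  refine ⟨∑ p, ∑ q, Complex.normSq (C p q) * ∑' n, aser n (lam q) (lam p), ?_, ?_⟩
  · refine Finset.sum_nonneg fun p _ => Finset.sum_nonneg fun q _ => ?_
    exact mul_nonneg (Complex.normSq_nonneg _) (tsum_aser_nonneg _ _)
  · calc ∑' n, g2 A B n z
        = ∑' n, ∑ p, ∑ q, ((Complex.normSq (C p q) : ℂ))
            * ((aser n (lam q) (lam p) : ℝ) : ℂ) := tsum_congr hg2eq
      _ = ∑ p, ∑' n, ∑ q, ((Complex.normSq (C p q) : ℂ))
            * ((aser n (lam q) (lam p) : ℝ) : ℂ) :=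
          Summable.tsum_finsetSum (fun p _ => summable_sum fun q _ => hsumpq p q)
      _ = ∑ p, ∑ q, ∑' n, ((Complex.normSq (C p q) : ℂ))
            * ((aser n (lam q) (lam p) : ℝ) : ℂ) :=
          Finset.sum_congr rfl fun p _ => Summable.tsum_finsetSum (fun q _ => hsumpq p q)
      _ = ∑ p, ∑ q, ((Complex.normSq (C p q) : ℂ))
            * (((∑' n, aser n (lam q) (lam p)) : ℝ) : ℂ) := by
          refine Finset.sum_congr rfl fun p _ => Finset.sum_congr rfl fun q _ => ?_
          rw [tsum_mul_left, Complex.ofReal_tsum]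
      _ = ((∑ p, ∑ q, Complex.normSq (C p q) * ∑' n, aser n (lam q) (lam p) : ℝ) : ℂ) := by
          push_cast
          rfl

end BMVAux

theorem bmv_second_deriv_nonneg (d : ℕ) (hd : 1 ≤ d)
    (A B : Matrix (Fin d) (Fin d) ℂ)
    (hA : A.IsHermitian) (hB : B.PosSemidef) :
    ∀ z : ℝ, 0 ≤ z →
      ((deriv (deriv (fun z : ℝ => (exp (A - (z : ℂ) • B)).trace)) z).im = 0 ∧
        0 ≤ (deriv (deriv (fun z : ℝ => (exp (A - (z : ℂ) • B)).trace)) z).re) := by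
  intro z _
  have hd0 : 0 < d := hd
  have h1 : deriv (fun z : ℝ => (exp (A - (z:ℂ) • B)).trace)
      = fun y => ∑' n, BMVAux.g1 A B n y :=
    funext fun y => (BMVAux.hasDerivAt_sum1 hd0 A B y).deriv
  rw [h1]
  have h2 : deriv (fun y => ∑' n, BMVAux.g1 A B n y) z = ∑' n, BMVAux.g2 A B n z :=
    (BMVAux.hasDerivAt_sum2 hd0 A B z).deriv
  rw [h2]
  obtain ⟨r, hr, hrq⟩ := BMVAux.tsum_g2_eq A B hA hB.1 z
  rw [hrq]
  exact ⟨Complex.ofReal_im r, by simpa using hr⟩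
end

section
/- Let k ≥ 0, m ≥ 0, r ≥ 0 and 0 ≤ j ≤ k be integers with j ≡ m (mod 2), and let C, D be real numbers with D ≠ 0. Set v = 2CD/(C² + D²). Then 2^j · Σ_{i=0}^{k−j} C(k−j, i) · ((2k+m−j−2i)/2)_r · C^{j+2i} · D^{2k−j−2i} = (C² + D²)^k · v^j · Σ_{ρ=0}^{r} (−1)^ρ · C(r,ρ) · ((2k+m−j)/2)_{r−ρ} · (k−j)(k−j−1)···(k−j−ρ+1) · (Cv/(2D))^ρ, where the falling-factorial factor (k−j)(k−j−1)···(k−j−ρ+1) is 1 for ρ = 0 and 0 whenever ρ > k−j. -/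
open Finset

lemma descFactorial_cast_mul_sub (i ρ : ℕ) :
    (Nat.descFactorial i ρ : ℝ) * ((i : ℝ) - ρ) = (Nat.descFactorial i (ρ + 1) : ℝ) := by
  rcases le_or_gt ρ i with h | h
  · rw [Nat.descFactorial_succ, Nat.cast_mul, Nat.cast_sub h]; ring
  · rw [Nat.descFactorial_eq_zero_iff_lt.2 h,
      Nat.descFactorial_eq_zero_iff_lt.2 (Nat.lt_succ_of_lt h)]
    simp

lemma poch_shift (r i : ℕ) (a : ℝ) :
    (ascPochhammer ℝ r).eval (a - i) =
      ∑ ρ ∈ range (r + 1), (-1 : ℝ) ^ ρ * (r.choose ρ : ℝ) * (Nat.descFactorial i ρ : ℝ) *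
        (ascPochhammer ℝ (r - ρ)).eval a := by
  induction r with
  | zero => simp
  | succ r ih =>
    rw [ascPochhammer_succ_eval, ih, Finset.sum_mul]
    have key : ∀ ρ ∈ range (r + 1),
        (-1 : ℝ) ^ ρ * (r.choose ρ : ℝ) * (Nat.descFactorial i ρ : ℝ) *
          (ascPochhammer ℝ (r - ρ)).eval a * (a - i + r)
        = ((-1 : ℝ) ^ ρ * (r.choose ρ : ℝ) * (Nat.descFactorial i ρ : ℝ) *
            (ascPochhammer ℝ (r + 1 - ρ)).eval a)
          + ((-1 : ℝ) ^ (ρ + 1) * (r.choose ρ : ℝ) * (Nat.descFactorial i (ρ + 1) : ℝ) *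
            (ascPochhammer ℝ (r - ρ)).eval a) := by
      intro ρ hρ
      have hρ' : ρ ≤ r := by simpa [Nat.lt_succ_iff] using hρ
      have h1 : (ascPochhammer ℝ (r - ρ)).eval a * (a + ((r - ρ : ℕ) : ℝ))
          = (ascPochhammer ℝ (r + 1 - ρ)).eval a := by
        have h : r + 1 - ρ = (r - ρ) + 1 := by omega
        rw [h, ascPochhammer_succ_eval]
      have h3 : (a - i + r) = (a + ((r - ρ : ℕ) : ℝ)) - ((i : ℝ) - ρ) := by
        rw [Nat.cast_sub hρ']; ring
      rw [h3, mul_sub]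
      rw [show (-1 : ℝ) ^ ρ * (r.choose ρ : ℝ) * (Nat.descFactorial i ρ : ℝ) *
            (ascPochhammer ℝ (r - ρ)).eval a * (a + ((r - ρ : ℕ) : ℝ))
          = (-1 : ℝ) ^ ρ * (r.choose ρ : ℝ) * (Nat.descFactorial i ρ : ℝ) *
            ((ascPochhammer ℝ (r - ρ)).eval a * (a + ((r - ρ : ℕ) : ℝ))) by ring, h1]
      rw [show (-1 : ℝ) ^ ρ * (r.choose ρ : ℝ) * (Nat.descFactorial i ρ : ℝ) *
            (ascPochhammer ℝ (r - ρ)).eval a * ((i : ℝ) - ρ)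
          = (-1 : ℝ) ^ ρ * (r.choose ρ : ℝ) *
            ((Nat.descFactorial i ρ : ℝ) * ((i : ℝ) - ρ)) *
            (ascPochhammer ℝ (r - ρ)).eval a by ring, descFactorial_cast_mul_sub]
      rw [pow_succ]
      ring
    rw [Finset.sum_congr rfl key, Finset.sum_add_distrib]
    -- Now: ΣA + ΣB = RHS over range (r+2)
    rw [Finset.sum_range_succ' (fun ρ => (-1 : ℝ) ^ ρ * ((r+1).choose ρ : ℝ) *
        (Nat.descFactorial i ρ : ℝ) * (ascPochhammer ℝ (r + 1 - ρ)).eval a) (r+1)]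
    rw [Finset.sum_range_succ' (fun ρ => (-1 : ℝ) ^ ρ * (r.choose ρ : ℝ) *
        (Nat.descFactorial i ρ : ℝ) * (ascPochhammer ℝ (r + 1 - ρ)).eval a) r]
    have hsplit : ∀ σ ∈ range (r + 1),
        (-1 : ℝ) ^ (σ + 1) * (((r+1).choose (σ+1) : ℕ) : ℝ) *
          (Nat.descFactorial i (σ+1) : ℝ) * (ascPochhammer ℝ (r + 1 - (σ+1))).eval a
        = ((-1 : ℝ) ^ (σ + 1) * (r.choose (σ+1) : ℝ) *
            (Nat.descFactorial i (σ+1) : ℝ) * (ascPochhammer ℝ (r - σ)).eval a)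
          + ((-1 : ℝ) ^ (σ + 1) * (r.choose σ : ℝ) *
            (Nat.descFactorial i (σ+1) : ℝ) * (ascPochhammer ℝ (r - σ)).eval a) := by
      intro σ hσ
      have : r + 1 - (σ + 1) = r - σ := by omega
      rw [this, Nat.choose_succ_succ]
      push_cast
      ring
    rw [Finset.sum_congr rfl hsplit, Finset.sum_add_distrib]
    rw [Finset.sum_range_succ (fun σ => (-1 : ℝ) ^ (σ + 1) * (r.choose (σ+1) : ℝ) *
        (Nat.descFactorial i (σ+1) : ℝ) * (ascPochhammer ℝ (r - σ)).eval a) r]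
    simp only [Nat.choose_succ_self, Nat.cast_zero, Nat.choose_zero_right, Nat.cast_one,
      Nat.descFactorial_zero]
    have hcongr : ∀ σ ∈ range r,
        (-1 : ℝ) ^ (σ + 1) * (r.choose (σ+1) : ℝ) * (Nat.descFactorial i (σ+1) : ℝ) *
          (ascPochhammer ℝ (r + 1 - (σ+1))).eval a
        = (-1 : ℝ) ^ (σ + 1) * (r.choose (σ+1) : ℝ) * (Nat.descFactorial i (σ+1) : ℝ) *
          (ascPochhammer ℝ (r - σ)).eval a := by
      intro σ hσ
      have h : r + 1 - (σ + 1) = r - σ := by omega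
      rw [h]
    rw [Finset.sum_congr rfl hcongr]
    ring


lemma sum_choose_descFactorial (n ρ : ℕ) (x y : ℝ) :
    ∑ i ∈ range (n + 1), (n.choose i : ℝ) * (Nat.descFactorial i ρ : ℝ) * x ^ i * y ^ (n - i)
      = (Nat.descFactorial n ρ : ℝ) * x ^ ρ * (x + y) ^ (n - ρ) := by
  rcases le_or_gt ρ n with h | h
  · have hsplit : n + 1 = ρ + (n - ρ + 1) := by omega
    rw [hsplit, Finset.sum_range_add]
    have hzero : ∑ i ∈ range ρ, (n.choose i : ℝ) * (Nat.descFactorial i ρ : ℝ) *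
        x ^ i * y ^ (n - i) = 0 := by
      apply Finset.sum_eq_zero
      intro i hi
      have hi' : i < ρ := Finset.mem_range.1 hi
      rw [Nat.descFactorial_eq_zero_iff_lt.2 hi']
      simp
    rw [hzero, zero_add]
    have hterm : ∀ l ∈ range (n - ρ + 1),
        (n.choose (ρ + l) : ℝ) * (Nat.descFactorial (ρ + l) ρ : ℝ) *
          x ^ (ρ + l) * y ^ (n - (ρ + l))
        = (Nat.descFactorial n ρ : ℝ) * x ^ ρ *
            (x ^ l * y ^ ((n - ρ) - l) * (((n - ρ).choose l : ℕ) : ℝ)) := by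
      intro l hl
      have hl' : l ≤ n - ρ := by have := Finset.mem_range.1 hl; omega
      have hnat : n.choose (ρ + l) * Nat.descFactorial (ρ + l) ρ
          = Nat.descFactorial n ρ * (n - ρ).choose l := by
        have hc := Nat.choose_mul (n := n) (show ρ ≤ ρ + l by omega)
        rw [show ρ + l - ρ = l by omega] at hc
        rw [Nat.descFactorial_eq_factorial_mul_choose, Nat.descFactorial_eq_factorial_mul_choose]
        calc n.choose (ρ + l) * ((Nat.factorial ρ) * (ρ + l).choose ρ)
            = (Nat.factorial ρ) * (n.choose (ρ + l) * (ρ + l).choose ρ) := by ring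
          _ = (Nat.factorial ρ) * (n.choose ρ * (n - ρ).choose l) := by rw [hc]
          _ = (Nat.factorial ρ) * n.choose ρ * (n - ρ).choose l := by ring
      have hsub : n - (ρ + l) = (n - ρ) - l := by omega
      rw [hsub, pow_add]
      calc (n.choose (ρ + l) : ℝ) * (Nat.descFactorial (ρ + l) ρ : ℝ) *
            (x ^ ρ * x ^ l) * y ^ ((n - ρ) - l)
          = ((n.choose (ρ + l) * Nat.descFactorial (ρ + l) ρ : ℕ) : ℝ) *
            (x ^ ρ * x ^ l) * y ^ ((n - ρ) - l) := by push_cast; ring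
        _ = ((Nat.descFactorial n ρ * (n - ρ).choose l : ℕ) : ℝ) *
            (x ^ ρ * x ^ l) * y ^ ((n - ρ) - l) := by rw [hnat]
        _ = _ := by push_cast; ring
    rw [Finset.sum_congr rfl hterm, ← Finset.mul_sum, ← add_pow]
  · rw [Nat.descFactorial_eq_zero_iff_lt.2 h]
    simp only [Nat.cast_zero, zero_mul]
    apply Finset.sum_eq_zero
    intro i hi
    have hi' : i < ρ := by have := Finset.mem_range.1 hi; omega
    rw [Nat.descFactorial_eq_zero_iff_lt.2 hi']
    simp

lemma key_transform (n r : ℕ) (a x y : ℝ) :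
    ∑ i ∈ range (n + 1),
        (n.choose i : ℝ) * (ascPochhammer ℝ r).eval (a - i) * x ^ i * y ^ (n - i)
      = ∑ ρ ∈ range (r + 1), (-1 : ℝ) ^ ρ * (r.choose ρ : ℝ) *
          (ascPochhammer ℝ (r - ρ)).eval a * (Nat.descFactorial n ρ : ℝ) *
          x ^ ρ * (x + y) ^ (n - ρ) := by
  have h1 : ∀ i ∈ range (n + 1),
      (n.choose i : ℝ) * (ascPochhammer ℝ r).eval (a - i) * x ^ i * y ^ (n - i)
      = ∑ ρ ∈ range (r + 1), (-1 : ℝ) ^ ρ * (r.choose ρ : ℝ) *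
          (ascPochhammer ℝ (r - ρ)).eval a *
          ((n.choose i : ℝ) * (Nat.descFactorial i ρ : ℝ) * x ^ i * y ^ (n - i)) := by
    intro i _
    rw [poch_shift r i a, Finset.mul_sum, Finset.sum_mul, Finset.sum_mul]
    apply Finset.sum_congr rfl
    intro ρ _
    ring
  rw [Finset.sum_congr rfl h1, Finset.sum_comm]
  apply Finset.sum_congr rfl
  intro ρ _
  rw [← Finset.mul_sum, sum_choose_descFactorial]
  ring

theorem hypergeometric_transform (k m r j : ℕ) (hj : j ≤ k) (hpar : j % 2 = m % 2)
    (C D : ℝ) (hD : D ≠ 0) (v : ℝ) (hv : v = 2 * C * D / (C ^ 2 + D ^ 2)) :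
    2 ^ j * ∑ i ∈ Finset.range (k - j + 1),
        (Nat.choose (k - j) i : ℝ) *
          (ascPochhammer ℝ r).eval (((2 * k + m : ℝ) - j - 2 * i) / 2) *
          C ^ (j + 2 * i) * D ^ (2 * k - j - 2 * i)
      = (C ^ 2 + D ^ 2) ^ k * v ^ j *
          ∑ ρ ∈ Finset.range (r + 1),
            (-1 : ℝ) ^ ρ * (Nat.choose r ρ : ℝ) *
              (ascPochhammer ℝ (r - ρ)).eval (((2 * k + m : ℝ) - j) / 2) *
              (Nat.descFactorial (k - j) ρ : ℝ) * (C * v / (2 * D)) ^ ρ := by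
  set n := k - j with hn
  set a : ℝ := ((2 * k + m : ℝ) - j) / 2 with ha
  have hD2 : (0 : ℝ) < D ^ 2 := by positivity
  have hS : (0 : ℝ) < C ^ 2 + D ^ 2 := by nlinarith [sq_nonneg C]
  have hS' : (C ^ 2 + D ^ 2) ≠ 0 := ne_of_gt hS
  -- LHS rewrite
  have hL : 2 ^ j * ∑ i ∈ Finset.range (n + 1),
        (Nat.choose n i : ℝ) *
          (ascPochhammer ℝ r).eval (((2 * k + m : ℝ) - j - 2 * i) / 2) *
          C ^ (j + 2 * i) * D ^ (2 * k - j - 2 * i)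
      = 2 ^ j * C ^ j * D ^ j * ∑ i ∈ range (n + 1),
          (n.choose i : ℝ) * (ascPochhammer ℝ r).eval (a - i) *
          (C ^ 2) ^ i * (D ^ 2) ^ (n - i) := by
    rw [Finset.mul_sum, Finset.mul_sum]
    apply Finset.sum_congr rfl
    intro i hi
    have hi' : i ≤ n := by have := Finset.mem_range.1 hi; omega
    have h1 : ((2 * k + m : ℝ) - j - 2 * i) / 2 = a - i := by rw [ha]; ring
    have h2 : j + 2 * i = j + 2 * i := rfl
    have h3 : 2 * k - j - 2 * i = j + 2 * (n - i) := by omega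
    rw [h1, h3, pow_add, pow_add, pow_mul, pow_mul]
    ring
  rw [hL, key_transform n r a (C ^ 2) (D ^ 2)]
  -- RHS side
  have hCv : C * v / (2 * D) = C ^ 2 / (C ^ 2 + D ^ 2) := by
    rw [hv]; field_simp
  have hvj : (C ^ 2 + D ^ 2) ^ k * v ^ j = 2 ^ j * C ^ j * D ^ j * (C ^ 2 + D ^ 2) ^ n := by
    rw [hv, div_pow,
      show (C ^ 2 + D ^ 2) ^ k = (C ^ 2 + D ^ 2) ^ n * (C ^ 2 + D ^ 2) ^ j by
        rw [← pow_add]; congr 1; omega]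
    rw [mul_pow, mul_pow]
    field_simp
  rw [hCv, hvj, Finset.mul_sum, Finset.mul_sum]
  apply Finset.sum_congr rfl
  intro ρ hρ
  rcases le_or_gt ρ n with h | h
  · rw [show (C ^ 2 + D ^ 2) ^ n = (C ^ 2 + D ^ 2) ^ ρ * (C ^ 2 + D ^ 2) ^ (n - ρ) by
      rw [← pow_add]; congr 1; omega]
    rw [div_pow]
    field_simp
  · rw [Nat.descFactorial_eq_zero_iff_lt.2 h]
    simp
end

section
/- Let k ≥ 1 and r ≥ 1 be integers and let v, ξ be real numbers. Then A_r(k;v,ξ) = ∫_0^1 [ Σ_{ℓ=0}^{⌊k/2⌋} k!/(ℓ!·(ℓ+r−1)!·(k−2ℓ)!) · (1+sv)^{k−2ℓ} · ((1−v²)/2)^ℓ · ((1−s²)/2)^{ℓ+r−1} ] · e^{sξ} ds. -/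
open Finset

/-- `bmvA k r v ξ = A_r(k; v, ξ)`, the double series
`Σ_m Σ_{j=0}^k C(k,j) · 2^{k+r−1} · ((m−j+2)/2)_{k+r−1} / (m+1)_{k+2r−1} · v^j · ξ^m/m!`. -/
noncomputable def bmvA (k r : ℕ) (v ξ : ℝ) : ℝ :=
  ∑' m : ℕ, ∑ j ∈ Finset.range (k + 1),
    (Nat.choose k j : ℝ) * 2 ^ (k + r - 1) *
      (ascPochhammer ℝ (k + r - 1)).eval (((m : ℝ) - j + 2) / 2) /
      (ascPochhammer ℝ (k + 2 * r - 1)).eval ((m : ℝ) + 1) *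
      v ^ j * ξ ^ m / (Nat.factorial m : ℝ)


set_option maxHeartbeats 2000000

noncomputable section BMVAux

/-- Shifted product `x (x+1) ⋯ (x+n-1)`. -/
def qq (x : ℝ) (n : ℕ) : ℝ := ∏ i ∈ Finset.range n, (x + i)

/-- Odd-step product `x (x+2) ⋯ (x+2n-2)`. -/
def opp (x : ℝ) (n : ℕ) : ℝ := ∏ i ∈ Finset.range n, (x + 2 * i)

lemma qq_zero (x : ℝ) : qq x 0 = 1 := by simp [qq]
lemma opp_zero (x : ℝ) : opp x 0 = 1 := by simp [opp]

lemma qq_succ (x : ℝ) (n : ℕ) : qq x (n + 1) = qq x n * (x + n) := by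
  simp [qq, Finset.prod_range_succ]

lemma opp_succ (x : ℝ) (n : ℕ) : opp x (n + 1) = opp x n * (x + 2 * n) := by
  simp [opp, Finset.prod_range_succ]

lemma qq_succ' (x : ℝ) (n : ℕ) : qq x (n + 1) = x * qq (x + 1) n := by
  rw [qq, Finset.prod_range_succ']
  push_cast
  rw [add_zero, mul_comm]
  congr 1
  exact Finset.prod_congr rfl fun i _ => by push_cast; ring

lemma opp_succ' (x : ℝ) (n : ℕ) : opp x (n + 1) = x * opp (x + 2) n := by
  rw [opp, Finset.prod_range_succ']
  push_cast
  rw [mul_zero, add_zero, mul_comm]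
  congr 1
  exact Finset.prod_congr rfl fun i _ => by push_cast; ring

lemma qq_pos {x : ℝ} (hx : 0 < x) (n : ℕ) : 0 < qq x n :=
  Finset.prod_pos fun i _ => by positivity

lemma opp_pos {x : ℝ} (hx : 0 < x) (n : ℕ) : 0 < opp x n :=
  Finset.prod_pos fun i _ => by positivity

lemma poch_eval (n : ℕ) (x : ℝ) : (ascPochhammer ℝ n).eval x = qq x n := by
  induction n with
  | zero => simp [qq]
  | succ n ih => rw [ascPochhammer_succ_eval, ih, qq_succ]

lemma two_pow_mul_qq_half (y : ℝ) (n : ℕ) : 2 ^ n * qq (y / 2) n = opp y n := by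
  rw [qq, opp]
  rw [show (2:ℝ)^n = ∏ _i ∈ Finset.range n, (2:ℝ) by simp, ← Finset.prod_mul_distrib]
  exact Finset.prod_congr rfl fun i _ => by ring

lemma qq_interleave (x : ℝ) : ∀ n : ℕ,
    qq x (2 * n) = opp x n * opp (x + 1) n ∧
      qq x (2 * n + 1) = opp x (n + 1) * opp (x + 1) n := by
  intro n
  induction n with
  | zero => simp [qq, opp, qq_succ]
  | succ n ih =>
    have h1 : qq x (2 * (n + 1)) = opp x (n + 1) * opp (x + 1) (n + 1) := by
      have : 2 * (n + 1) = (2 * n + 1) + 1 := by ring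
      rw [this, qq_succ, ih.2, opp_succ (x + 1) n]
      push_cast; ring
    refine ⟨h1, ?_⟩
    rw [qq_succ, h1, opp_succ x (n + 1)]
    push_cast; ring


def tt (k r : ℕ) (x : ℝ) (j : ℕ) : ℝ :=
  (Nat.choose k j : ℝ) * opp (x - j + 2) (k + r - 1) / qq (x + 1) (k + 2 * r - 1)

lemma tt_def' (k w : ℕ) (x : ℝ) (j : ℕ) :
    tt k (w + 1) x j
      = (Nat.choose k j : ℝ) * opp (x - j + 2) (k + w) / qq (x + 1) (k + 2 * w + 1) := by
  have h1 : k + (w + 1) - 1 = k + w := by omega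
  have h2 : k + 2 * (w + 1) - 1 = k + 2 * w + 1 := by omega
  rw [tt, h1, h2]

lemma tt_core (k w j : ℕ) (x : ℝ) (hx : 0 ≤ x) (hj : j ≤ k + 2) :
    tt (k + 2) (w + 1) x j =
      tt (k + 1) (w + 1) x j
        + (if j = 0 then 0 else tt (k + 1) (w + 1) (x + 1) (j - 1))
        + ((k : ℝ) + 1) *
          (tt k (w + 2) x j - if j ≤ 1 then 0 else tt k (w + 2) x (j - 2)) := by
  have hx1 : (x : ℝ) + 1 ≠ 0 := by positivity
  have hQ2 : qq (x + 2) (k + 2 * w + 2) ≠ 0 := ne_of_gt (qq_pos (by linarith) _)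
  have hQL : x + 1 + ((k : ℝ) + 2 * w + 2) ≠ 0 := by positivity
  have hQ1' : qq (x + 1) (k + 2 * w + 2)
      = (x + 1) * qq (x + 2) (k + 2 * w + 2) / (x + 1 + ((k : ℝ) + 2 * w + 2)) := by
    rw [eq_div_iff hQL]
    have h := qq_succ (x + 1) (k + 2 * w + 2)
    have h' := qq_succ' (x + 1) (k + 2 * w + 2)
    rw [h] at h'
    rw [show (x : ℝ) + 1 + 1 = x + 2 by ring] at h'
    rw [← h']
    push_cast
    ring
  -- index normalizations used in every branch
  have i1 : k + 2 + w = (k + w + 1) + 1 := by omega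
  have i2 : k + 2 + 2 * w + 1 = (k + 2 * w + 2) + 1 := by omega
  have i3 : k + 1 + w = k + w + 1 := by omega
  have i4 : k + 1 + 2 * w + 1 = k + 2 * w + 2 := by omega
  have i5 : k + (w + 1) = k + w + 1 := by omega
  have i6 : k + 2 * (w + 1) + 1 = (k + 2 * w + 2) + 1 := by omega
  rcases j with _ | j
  · -- j = 0
    rw [if_pos rfl, if_pos (by norm_num : (0:ℕ) ≤ 1)]
    rw [tt_def', tt_def', show w + 2 = (w + 1) + 1 from rfl, tt_def']
    rw [i1, i2, i3, i4, i5, i6]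
    simp only [Nat.cast_zero, sub_zero, Nat.choose_zero_right, Nat.cast_one, one_mul]
    rw [show k + w + 1 + 1 = (k + w + 1) + 1 from rfl, opp_succ, qq_succ',
      show (x : ℝ) + 1 + 1 = x + 2 by ring, hQ1']
    push_cast
    field_simp
    ring
  · rcases j with _ | n
    · -- j = 1
      simp only [show (0:ℕ) + 1 = 1 from rfl]
      rw [if_neg (by omega : ¬(1:ℕ) = 0), if_pos (by norm_num : (1:ℕ) ≤ 1)]
      rw [show (1:ℕ) - 1 = 0 from rfl]
      rw [tt_def', tt_def', tt_def', show w + 2 = (w + 1) + 1 from rfl, tt_def']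
      rw [i1, i2, i3, i4, i5, i6]
      simp only [Nat.cast_one, Nat.choose_one_right, Nat.choose_zero_right, Nat.cast_one,
        one_mul, Nat.sub_self]
      rw [show (x : ℝ) - 1 + 2 = x + 1 by ring, show (x : ℝ) + 1 - (0:ℕ) + 2 = x + 3 by push_cast; ring]
      rw [qq_succ', show (x : ℝ) + 1 + 1 = x + 2 by ring, hQ1']
      rw [show k + w + 1 + 1 = (k + w + 1) + 1 from rfl, opp_succ']
      rw [show (x : ℝ) + 1 + 2 = x + 3 by ring]
      -- substitute B := opp (x+1) (k+w+1) in terms of A := opp (x+3) (k+w+1)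
      have hden : (x : ℝ) + 1 + 2 * (k + w + 1) ≠ 0 := by positivity
      have hB' : opp (x + 1) (k + w + 1)
          = (x + 1) * opp (x + 3) (k + w + 1) / ((x : ℝ) + 1 + 2 * (k + w + 1)) := by
        rw [eq_div_iff hden]
        have h := opp_succ (x + 1) (k + w + 1)
        have h' := opp_succ' (x + 1) (k + w + 1)
        rw [h, show (x : ℝ) + 1 + 2 = x + 3 by ring] at h'
        rw [← h']
        push_cast
        ring
      rw [hB']
      push_cast
      field_simp
      ring
    · -- j = n + 2
      simp only [show n + 1 + 1 = n + 2 from rfl]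
      rw [if_neg (by omega : ¬n + 2 = 0), if_neg (by omega : ¬n + 2 ≤ 1),
        show n + 2 - 1 = n + 1 from rfl, show n + 2 - 2 = n from rfl]
      rw [tt_def', tt_def', tt_def', show w + 2 = (w + 1) + 1 from rfl, tt_def', tt_def']
      rw [i1, i2, i3, i4, i5, i6]
      rw [show (x : ℝ) - (n + 2 : ℕ) + 2 = x - n by push_cast; ring,
        show (x : ℝ) + 1 - (n + 1 : ℕ) + 2 = x - n + 2 by push_cast; ring,
        show (x : ℝ) - (n : ℕ) + 2 = x - n + 2 by push_cast; ring]
      rw [qq_succ', show (x : ℝ) + 1 + 1 = x + 2 by ring, hQ1']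
      rw [show k + w + 1 + 1 = (k + w + 1) + 1 from rfl, opp_succ']
      rw [show (x : ℝ) - n + 2 = x - n + 2 by ring]
      have hn : (n : ℝ) ≤ k := by exact_mod_cast (by omega : n ≤ k)
      have hden : (x : ℝ) - n + 2 * (k + w + 1) ≠ 0 := by
        have : (0:ℝ) < x - n + 2 * (k + w + 1) := by
          have hw : (0:ℝ) ≤ w := Nat.cast_nonneg w
          have hk : (0:ℝ) ≤ k := Nat.cast_nonneg k
          nlinarith
        linarith
      have hB' : opp (x - n) (k + w + 1)
          = (x - n) * opp (x - n + 2) (k + w + 1) / ((x : ℝ) - n + 2 * (k + w + 1)) := by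
        rw [eq_div_iff hden]
        have h := opp_succ (x - n) (k + w + 1)
        have h' := opp_succ' (x - n) (k + w + 1)
        rw [h] at h'
        rw [← h']
        push_cast
        ring
      rw [hB']
      -- binomial relations
      have hk2 : ((k : ℝ) + 2) ≠ 0 := by positivity
      have hk1 : ((k : ℝ) + 1) ≠ 0 := by positivity
      have hc1 : ((k + 1).choose (n + 2) : ℝ) = ((k + 2).choose (n + 2) : ℝ) * ((k : ℝ) - n) / (k + 2) := by
        rw [eq_div_iff hk2]
        have h := Nat.choose_mul_succ_eq (k + 1) (n + 2)
        have hsub : k + 1 + 1 - (n + 2) = k - n := by omega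
        rw [hsub] at h
        have : (((k + 1).choose (n + 2) * (k + 1 + 1) : ℕ) : ℝ) = (((k + 2).choose (n + 2) * (k - n) : ℕ) : ℝ) := by
          exact_mod_cast h
        push_cast [Nat.cast_sub (by omega : n ≤ k)] at this
        linarith [this]
      have hc2 : ((k + 1).choose (n + 1) : ℝ) = ((k + 2).choose (n + 2) : ℝ) * ((n : ℝ) + 2) / (k + 2) := by
        rw [eq_div_iff hk2]
        have h := Nat.add_one_mul_choose_eq (k + 1) (n + 1)
        have : ((Nat.succ (k + 1) * (k + 1).choose (n + 1) : ℕ) : ℝ)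
            = (((k + 2).choose (n + 2) * Nat.succ (n + 1) : ℕ) : ℝ) := by
          exact_mod_cast h
        push_cast [Nat.succ_eq_add_one] at this
        linarith [this]
      have hc3 : (k.choose (n + 2) : ℝ) = ((k + 1).choose (n + 2) : ℝ) * ((k : ℝ) - 1 - n) / (k + 1) := by
        rw [eq_div_iff hk1]
        rcases le_or_gt (n + 2) (k + 1) with hle | hlt
        · have h := Nat.choose_mul_succ_eq k (n + 2)
          have hsub : k + 1 - (n + 2) = k - 1 - n := by omega
          rw [hsub] at h
          have : ((k.choose (n + 2) * (k + 1) : ℕ) : ℝ) = (((k + 1).choose (n + 2) * (k - 1 - n) : ℕ) : ℝ) := by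
            exact_mod_cast h
          push_cast [Nat.cast_sub (by omega : n ≤ k - 1), Nat.cast_sub (by omega : 1 ≤ k)] at this
          linarith [this]
        · rw [Nat.choose_eq_zero_of_lt (by omega), Nat.choose_eq_zero_of_lt (by omega)]
          norm_num
      have hc4 : (k.choose n : ℝ) = ((k + 1).choose (n + 1) : ℝ) * ((n : ℝ) + 1) / (k + 1) := by
        rw [eq_div_iff hk1]
        have h := Nat.add_one_mul_choose_eq k n
        have : ((Nat.succ k * k.choose n : ℕ) : ℝ) = (((k + 1).choose (n + 1) * Nat.succ n : ℕ) : ℝ) := by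
          exact_mod_cast h
        push_cast [Nat.succ_eq_add_one] at this
        linarith [this]
      rw [hc3, hc4, hc1, hc2]
      push_cast
      field_simp
      ring

/-- partial sums in `v` of the series coefficients -/
def ss (k r : ℕ) (x v : ℝ) : ℝ := ∑ j ∈ Finset.range (k + 1), tt k r x j * v ^ j

lemma tt_choose_zero {k r j : ℕ} (h : k < j) (x : ℝ) : tt k r x j = 0 := by
  rw [tt, Nat.choose_eq_zero_of_lt h]
  simp

lemma ss_rec (k w : ℕ) (x v : ℝ) (hx : 0 ≤ x) :
    ss (k + 2) (w + 1) x v =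
      ss (k + 1) (w + 1) x v + v * ss (k + 1) (w + 1) (x + 1) v
        + ((k : ℝ) + 1) * (1 - v ^ 2) * ss k (w + 2) x v := by
  have e1 : ss (k + 1) (w + 1) x v
      = ∑ j ∈ Finset.range (k + 3), tt (k + 1) (w + 1) x j * v ^ j := by
    rw [show k + 3 = (k + 2) + 1 from rfl, Finset.sum_range_succ,
      tt_choose_zero (by omega : k + 1 < k + 2), ss]
    ring
  have e2 : v * ss (k + 1) (w + 1) (x + 1) v
      = ∑ j ∈ Finset.range (k + 3),
          (if j = 0 then 0 else tt (k + 1) (w + 1) (x + 1) (j - 1)) * v ^ j := by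
    rw [Finset.sum_range_succ']
    simp only [Nat.succ_ne_zero, if_neg, if_pos rfl, Nat.add_sub_cancel, reduceIte]
    rw [ss, Finset.mul_sum]
    rw [Finset.sum_congr rfl (fun j _ => show v * (tt (k+1) (w+1) (x+1) j * v ^ j)
      = tt (k+1) (w+1) (x+1) j * v ^ (j+1) from by ring)]
    ring
  have e3 : ss k (w + 2) x v
      = ∑ j ∈ Finset.range (k + 3), tt k (w + 2) x j * v ^ j := by
    rw [show k + 3 = (k + 2) + 1 from rfl, Finset.sum_range_succ, Finset.sum_range_succ,
      tt_choose_zero (by omega : k < k + 2), tt_choose_zero (by omega : k < k + 1), ss]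
    ring
  have e4 : v ^ 2 * ss k (w + 2) x v
      = ∑ j ∈ Finset.range (k + 3),
          (if j ≤ 1 then 0 else tt k (w + 2) x (j - 2)) * v ^ j := by
    rw [Finset.sum_range_succ', Finset.sum_range_succ']
    have h0 : (if (0:ℕ) ≤ 1 then (0:ℝ) else tt k (w + 2) x (0 - 2)) * v ^ 0 = 0 := by norm_num
    have h1 : (if (0 + 1 : ℕ) ≤ 1 then (0:ℝ) else tt k (w + 2) x (0 + 1 - 2)) * v ^ (0 + 1) = 0 := by
      norm_num
    rw [h0, h1, add_zero, add_zero, ss, Finset.mul_sum]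
    refine Finset.sum_congr rfl fun j hj => ?_
    rw [if_neg (by omega : ¬ j + 1 + 1 ≤ 1), show j + 1 + 1 - 2 = j from rfl]
    ring
  rw [show ((k:ℝ) + 1) * (1 - v ^ 2) * ss k (w + 2) x v
    = ((k:ℝ) + 1) * (ss k (w + 2) x v - v ^ 2 * ss k (w + 2) x v) from by ring,
    e4, e3, e2, e1]
  rw [ss, show k + 2 + 1 = k + 3 from rfl, ← Finset.sum_sub_distrib, Finset.mul_sum,
    ← Finset.sum_add_distrib, ← Finset.sum_add_distrib]
  refine Finset.sum_congr rfl fun j hj => ?_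
  rw [tt_core k w j x hx (Nat.lt_succ_iff.mp (Finset.mem_range.mp hj))]
  ring

/-- `tt 0 (w+1)` base value. -/
lemma tt_base00 (w : ℕ) (x : ℝ) (hx : 0 ≤ x) : tt 0 (w + 1) x 0 = 1 / opp (x + 1) (w + 1) := by
  rw [tt_def', show 0 + w = w from by omega, show 0 + 2 * w + 1 = 2 * w + 1 from by omega,
    (qq_interleave (x + 1) w).2, show (x:ℝ) + 1 + 1 = x + 2 by ring]
  have h2 : opp (x + 2) w ≠ 0 := ne_of_gt (opp_pos (by linarith) _)
  have h1 : opp (x + 1) (w + 1) ≠ 0 := ne_of_gt (opp_pos (by linarith) _)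
  rw [Nat.choose_self, Nat.cast_one, Nat.cast_zero, sub_zero, one_mul,
    div_eq_div_iff (mul_ne_zero h1 h2) h1]
  ring

lemma tt_base10 (w : ℕ) (x : ℝ) (hx : 0 ≤ x) : tt 1 (w + 1) x 0 = 1 / opp (x + 1) (w + 1) := by
  rw [tt_def', show 1 + w = w + 1 from by omega, show 1 + 2 * w + 1 = 2 * (w + 1) from by omega,
    (qq_interleave (x + 1) (w + 1)).1, show (x:ℝ) + 1 + 1 = x + 2 by ring]
  have h2 : opp (x + 2) (w + 1) ≠ 0 := ne_of_gt (opp_pos (by linarith) _)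
  have h1 : opp (x + 1) (w + 1) ≠ 0 := ne_of_gt (opp_pos (by linarith) _)
  rw [Nat.choose_zero_right, Nat.cast_one, Nat.cast_zero, sub_zero, one_mul,
    div_eq_div_iff (mul_ne_zero h1 h2) h1]
  ring

lemma tt_base11 (w : ℕ) (x : ℝ) (hx : 0 ≤ x) : tt 1 (w + 1) x 1 = 1 / opp (x + 2) (w + 1) := by
  rw [tt_def', show 1 + w = w + 1 from by omega, show 1 + 2 * w + 1 = 2 * (w + 1) from by omega,
    (qq_interleave (x + 1) (w + 1)).1, show (x:ℝ) + 1 + 1 = x + 2 by ring,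
    show (x : ℝ) - (1:ℕ) + 2 = x + 1 by push_cast; ring]
  have h1 : opp (x + 1) (w + 1) ≠ 0 := ne_of_gt (opp_pos (by linarith) _)
  have h2 : opp (x + 2) (w + 1) ≠ 0 := ne_of_gt (opp_pos (by linarith) _)
  rw [Nat.choose_self, Nat.cast_one]
  field_simp

/-- the Beta-type integral. -/
lemma beta_int (p n : ℕ) :
    ∫ s in (0:ℝ)..1, s ^ n * (1 - s ^ 2) ^ p
      = 2 ^ p * (Nat.factorial p) / opp ((n : ℝ) + 1) (p + 1) := by
  induction p with
  | zero =>
    simp only [pow_zero, mul_one, Nat.factorial_zero, Nat.cast_one]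
    rw [integral_pow]
    rw [show opp ((n:ℝ) + 1) 1 = (n:ℝ) + 1 from by rw [show (1:ℕ) = 0 + 1 from rfl, opp_succ]; simp [opp]]
    norm_num
  | succ p ih =>
    have hF : ∀ s ∈ Set.uIcc (0:ℝ) 1,
        HasDerivAt (fun t : ℝ => t ^ (n + 1) * (1 - t ^ 2) ^ (p + 1))
          (((n : ℝ) + 1) * s ^ n * (1 - s ^ 2) ^ (p + 1)
            + s ^ (n + 1) * (((p : ℝ) + 1) * (1 - s ^ 2) ^ p * (-(2 * s)))) s := by
      intro s _
      have h1 : HasDerivAt (fun t : ℝ => t ^ (n + 1)) (((n:ℝ) + 1) * s ^ n) s := by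
        simpa using (hasDerivAt_pow (n + 1) s)
      have h2 : HasDerivAt (fun t : ℝ => (1 - t ^ 2) ^ (p + 1))
          (((p : ℝ) + 1) * (1 - s ^ 2) ^ p * (-(2 * s))) s := by
        have hin : HasDerivAt (fun t : ℝ => 1 - t ^ 2) (-(2 * s)) s := by
          simpa using ((hasDerivAt_pow 2 s).const_sub 1)
        have := (hasDerivAt_pow (p + 1) (1 - s ^ 2)).comp s hin
        simpa [Function.comp_def, mul_comm, mul_assoc, mul_left_comm] using this
      simpa [Pi.mul_def] using h1.mul h2
    have hint : IntervalIntegrable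
        (fun s : ℝ => ((n : ℝ) + 1) * s ^ n * (1 - s ^ 2) ^ (p + 1)
          + s ^ (n + 1) * (((p : ℝ) + 1) * (1 - s ^ 2) ^ p * (-(2 * s)))) MeasureTheory.volume 0 1 := by
      apply Continuous.intervalIntegrable
      fun_prop
    have h0 := intervalIntegral.integral_eq_sub_of_hasDerivAt hF hint
    simp only [one_pow, sub_self, zero_pow, Nat.succ_ne_zero, ne_eq, not_false_iff,
      zero_mul, mul_zero, sub_zero] at h0
    -- h0 : ∫ ... = 1^(n+1) * 0^(p+1) - 0 = 0
    have hsplit : ∀ s : ℝ, ((n : ℝ) + 1) * s ^ n * (1 - s ^ 2) ^ (p + 1)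
          + s ^ (n + 1) * (((p : ℝ) + 1) * (1 - s ^ 2) ^ p * (-(2 * s)))
        = ((n : ℝ) + 3 + 2 * p) * (s ^ n * (1 - s ^ 2) ^ (p + 1))
          - (2 * ((p : ℝ) + 1)) * (s ^ n * (1 - s ^ 2) ^ p) := by
      intro s
      ring
    rw [intervalIntegral.integral_congr (fun s _ => hsplit s)] at h0
    have hi1 : IntervalIntegrable (fun s : ℝ => s ^ n * (1 - s ^ 2) ^ (p + 1))
        MeasureTheory.volume 0 1 := by apply Continuous.intervalIntegrable; fun_prop
    have hi2 : IntervalIntegrable (fun s : ℝ => s ^ n * (1 - s ^ 2) ^ p)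
        MeasureTheory.volume 0 1 := by apply Continuous.intervalIntegrable; fun_prop
    rw [intervalIntegral.integral_sub ((hi1.const_mul _)) ((hi2.const_mul _)),
      intervalIntegral.integral_const_mul, intervalIntegral.integral_const_mul, ih] at h0
    -- solve for the target integral
    have hpos : (0:ℝ) < (n : ℝ) + 3 + 2 * p := by positivity
    have hopp : opp ((n:ℝ) + 1) (p + 2) = opp ((n:ℝ) + 1) (p + 1) * ((n:ℝ) + 3 + 2 * p) := by
      rw [opp_succ]
      push_cast
      ring
    have hoppne : opp ((n:ℝ) + 1) (p + 1) ≠ 0 := ne_of_gt (opp_pos (by positivity) _)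
    rw [hopp]
    have : (∫ s in (0:ℝ)..1, s ^ n * (1 - s ^ 2) ^ (p + 1))
        = 2 * ((p:ℝ) + 1) * (2 ^ p * (Nat.factorial p) / opp ((n:ℝ) + 1) (p + 1))
          / ((n : ℝ) + 3 + 2 * p) := by
      rw [eq_div_iff (ne_of_gt hpos)]
      linarith [h0]
    rw [this]
    push_cast [Nat.factorial_succ]
    field_simp
    ring

def pc (k r ℓ : ℕ) : ℝ :=
  if 2 * ℓ ≤ k then
    (Nat.factorial k : ℝ) /
      ((Nat.factorial ℓ : ℝ) * (Nat.factorial (ℓ + r - 1) : ℝ) *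
        (Nat.factorial (k - 2 * ℓ) : ℝ))
  else 0

def pp (k r : ℕ) (s v : ℝ) : ℝ :=
  ∑ ℓ ∈ Finset.range (k + 1),
    pc k r ℓ * (1 + s * v) ^ (k - 2 * ℓ) * ((1 - v ^ 2) / 2) ^ ℓ *
      ((1 - s ^ 2) / 2) ^ (ℓ + r - 1)

lemma pp_eq_statement (k r : ℕ) (s v : ℝ) :
    (∑ ℓ ∈ Finset.range (k / 2 + 1),
      (Nat.factorial k : ℝ) /
          ((Nat.factorial ℓ : ℝ) * (Nat.factorial (ℓ + r - 1) : ℝ) *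
            (Nat.factorial (k - 2 * ℓ) : ℝ)) *
        (1 + s * v) ^ (k - 2 * ℓ) * ((1 - v ^ 2) / 2) ^ ℓ *
        ((1 - s ^ 2) / 2) ^ (ℓ + r - 1)) = pp k r s v := by
  rw [pp]
  rw [← Finset.sum_subset (Finset.range_subset_range.mpr (by omega : k / 2 + 1 ≤ k + 1))
    (fun ℓ _ hℓ => by
      rw [pc, if_neg (by
        have : ¬ ℓ < k / 2 + 1 := fun h => hℓ (Finset.mem_range.mpr h)
        omega)]
      simp)]
  refine Finset.sum_congr rfl fun ℓ hℓ => ?_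
  rw [pc, if_pos (by have := Finset.mem_range.mp hℓ; omega)]

lemma pp_rec (k w : ℕ) (s v : ℝ) :
    pp (k + 2) (w + 1) s v =
      (1 + s * v) * pp (k + 1) (w + 1) s v
        + 2 * ((k : ℝ) + 1) * ((1 - v ^ 2) / 2) * pp k (w + 2) s v := by
  have e1 : (1 + s * v) * pp (k + 1) (w + 1) s v
      = ∑ ℓ ∈ Finset.range (k + 3),
          (1 + s * v) * (pc (k + 1) (w + 1) ℓ * (1 + s * v) ^ (k + 1 - 2 * ℓ) *
            ((1 - v ^ 2) / 2) ^ ℓ * ((1 - s ^ 2) / 2) ^ (ℓ + w)) := by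
    rw [show k + 3 = (k + 2) + 1 from rfl, Finset.sum_range_succ, pp]
    rw [pc, if_neg (by omega : ¬ 2 * (k + 2) ≤ k + 1)]
    simp only [zero_mul, mul_zero, zero_div, add_zero]
    rw [Finset.mul_sum]
    refine Finset.sum_congr rfl fun ℓ _ => ?_
    rw [show ℓ + (w + 1) - 1 = ℓ + w from by omega]
  have e2 : 2 * ((k : ℝ) + 1) * ((1 - v ^ 2) / 2) * pp k (w + 2) s v
      = ∑ ℓ ∈ Finset.range (k + 3),
          (if ℓ = 0 then 0 else
            2 * ((k : ℝ) + 1) * ((1 - v ^ 2) / 2) * (pc k (w + 2) (ℓ - 1) *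
              (1 + s * v) ^ (k - 2 * (ℓ - 1)) *
              ((1 - v ^ 2) / 2) ^ (ℓ - 1) * ((1 - s ^ 2) / 2) ^ (ℓ - 1 + w + 1))) := by
    rw [Finset.sum_range_succ']
    simp only [Nat.succ_ne_zero, reduceIte, Nat.add_sub_cancel, if_pos rfl, add_zero]
    rw [show k + 2 = (k + 1) + 1 from rfl, Finset.sum_range_succ,
      pc, if_neg (by omega : ¬ 2 * (k + 1) ≤ k)]
    simp only [zero_mul, mul_zero, zero_div, add_zero]
    rw [pp, Finset.mul_sum]
    refine Finset.sum_congr rfl fun ℓ _ => ?_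
    rw [show ℓ + (w + 2) - 1 = ℓ + w + 1 from by omega]
  rw [e1, e2, ← Finset.sum_add_distrib, pp, show k + 2 + 1 = k + 3 from rfl]
  refine Finset.sum_congr rfl fun ℓ hℓ => ?_
  have hℓ' : ℓ ≤ k + 2 := Nat.lt_succ_iff.mp (Finset.mem_range.mp hℓ)
  rw [show ℓ + (w + 1) - 1 = ℓ + w from by omega]
  rcases ℓ with _ | n
  · -- ℓ = 0
    rw [if_pos rfl, add_zero, pc, pc, if_pos (by omega : 2 * 0 ≤ k + 2),
      if_pos (by omega : 2 * 0 ≤ k + 1)]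
    rw [show (0:ℕ) + (w + 1) - 1 = w from by omega, show k + 2 - 2 * 0 = k + 2 from by omega,
      show k + 1 - 2 * 0 = k + 1 from by omega]
    simp only [Nat.factorial_zero, Nat.cast_one, Nat.mul_zero, Nat.sub_zero]
    have hrw : (Nat.factorial (k + 2) : ℝ) / ((1 : ℝ) * (Nat.factorial w : ℝ) * (Nat.factorial (k + 2) : ℝ))
        = (Nat.factorial (k + 1) : ℝ) / ((1 : ℝ) * (Nat.factorial w : ℝ) * (Nat.factorial (k + 1) : ℝ)) := by
      have h1 : (Nat.factorial (k + 2) : ℝ) ≠ 0 := by positivity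
      have h2 : (Nat.factorial (k + 1) : ℝ) ≠ 0 := by positivity
      have h3 : (Nat.factorial w : ℝ) ≠ 0 := by positivity
      field_simp
    rw [hrw, pow_succ]
    ring
  · -- ℓ = n + 1
    rw [if_neg (Nat.succ_ne_zero n), Nat.add_sub_cancel]
    simp only [pc]
    rcases le_or_gt (2 * (n + 1)) (k + 2) with hle | hlt
    · obtain ⟨a, rfl⟩ : ∃ a, k = 2 * n + a := ⟨k - 2 * n, by omega⟩
      rw [if_pos (show 2 * (n + 1) ≤ 2 * n + a + 2 by omega),
        if_pos (show 2 * n ≤ 2 * n + a by omega)]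
      rw [show n + 1 + (w + 1) - 1 = n + w + 1 from by omega,
        show n + (w + 2) - 1 = n + w + 1 from by omega,
        show 2 * n + a + 2 - 2 * (n + 1) = a from by omega,
        show 2 * n + a - 2 * n = a from by omega]
      have h1 : (Nat.factorial (n + 1) : ℝ) ≠ 0 := by positivity
      have h2 : (Nat.factorial (n + w + 1) : ℝ) ≠ 0 := by positivity
      have h3 : (Nat.factorial n : ℝ) ≠ 0 := by positivity
      rcases a with _ | b
      · rw [if_neg (show ¬ 2 * (n + 1) ≤ 2 * n + 0 + 1 by omega)]
        simp only [Nat.add_zero, Nat.factorial_zero, pow_zero, Nat.cast_ofNat, Nat.cast_one]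
        rw [show (2 * n + 0 + 2) = (2 * n + 1) + 1 from by omega, Nat.factorial_succ,
          Nat.factorial_succ (n := n), Nat.factorial_succ (n := 2 * n)]
        push_cast
        field_simp
        ring
      · rw [if_pos (show 2 * (n + 1) ≤ 2 * n + (b + 1) + 1 by omega),
          show 2 * n + (b + 1) + 1 - 2 * (n + 1) = b from by omega]
        have h4 : (Nat.factorial b : ℝ) ≠ 0 := by positivity
        have h5 : (Nat.factorial (b + 1) : ℝ) ≠ 0 := by positivity
        rw [show 2 * n + (b + 1) + 2 = (2 * n + b + 2) + 1 from by omega, Nat.factorial_succ,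
          show 2 * n + (b + 1) + 1 = (2 * n + b + 1) + 1 from by omega, Nat.factorial_succ,
          show 2 * n + (b + 1) = (2 * n + b) + 1 from by omega, Nat.factorial_succ,
          Nat.factorial_succ (n := b), Nat.factorial_succ (n := n),
          show 2 * n + b + 2 = (2 * n + b + 1) + 1 from by omega, Nat.factorial_succ,
          pow_succ]
        push_cast
        field_simp
        ring
    · rw [if_neg (show ¬ 2 * (n + 1) ≤ k + 2 by omega),
        if_neg (show ¬ 2 * (n + 1) ≤ k + 1 by omega),
        if_neg (show ¬ 2 * n ≤ k by omega)]
      ring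


lemma pp_cont (k r : ℕ) (v : ℝ) : Continuous fun s : ℝ => pp k r s v := by
  unfold pp
  apply continuous_finset_sum
  intro ℓ _
  fun_prop

lemma pp_intable (k r m : ℕ) (v : ℝ) :
    IntervalIntegrable (fun s : ℝ => pp k r s v * s ^ m) MeasureTheory.volume 0 1 :=
  (((pp_cont k r v).mul (continuous_pow m))).intervalIntegrable 0 1

lemma key : ∀ k w m : ℕ, ∀ v : ℝ,
    ss k (w + 1) (m : ℝ) v = ∫ s in (0:ℝ)..1, pp k (w + 1) s v * s ^ m := by
  intro k
  induction k using Nat.strong_induction_on with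
  | _ k ih =>
    rcases k with _ | k
    · -- k = 0
      intro w m v
      have hpp : ∀ s : ℝ, pp 0 (w + 1) s v * s ^ m
          = (1 / ((Nat.factorial w : ℝ) * 2 ^ w)) * (s ^ m * (1 - s ^ 2) ^ w) := by
        intro s
        rw [pp, Finset.sum_range_one, pc, if_pos (by omega : 2 * 0 ≤ 0),
          show (0:ℕ) + (w + 1) - 1 = w from by omega]
        simp only [Nat.factorial_zero, Nat.cast_one, Nat.sub_zero, Nat.mul_zero, pow_zero]
        have hw : (Nat.factorial w : ℝ) ≠ 0 := by positivity
        simp only [div_pow]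
        field_simp
      rw [intervalIntegral.integral_congr (fun s _ => hpp s),
        intervalIntegral.integral_const_mul, beta_int w m]
      have h1 : opp ((m:ℝ) + 1) (w + 1) ≠ 0 := ne_of_gt (opp_pos (by positivity) _)
      have hw : (Nat.factorial w : ℝ) ≠ 0 := by positivity
      rw [ss, Finset.sum_range_one, tt_base00 w _ (by positivity), pow_zero, mul_one]
      field_simp
    · rcases k with _ | k
      · -- k = 1
        intro w m v
        have hpp : ∀ s : ℝ, pp 1 (w + 1) s v * s ^ m
            = (1 / ((Nat.factorial w : ℝ) * 2 ^ w)) * (s ^ m * (1 - s ^ 2) ^ w)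
              + v * ((1 / ((Nat.factorial w : ℝ) * 2 ^ w)) * (s ^ (m + 1) * (1 - s ^ 2) ^ w)) := by
          intro s
          rw [pp, show (1:ℕ) + 1 = 2 from rfl, Finset.sum_range_succ, Finset.sum_range_one,
            pc, pc, if_pos (by omega : 2 * 0 ≤ 1), if_neg (by omega : ¬ 2 * 1 ≤ 1),
            show (0:ℕ) + (w + 1) - 1 = w from by omega]
          simp only [Nat.factorial_zero, Nat.cast_one, Nat.sub_zero, Nat.mul_zero, pow_zero,
            zero_mul, mul_zero, zero_div, add_zero]
          have hw : (Nat.factorial w : ℝ) ≠ 0 := by positivity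
          simp only [div_pow]
          field_simp
          ring
        rw [intervalIntegral.integral_congr (fun s _ => hpp s)]
        have i1 : IntervalIntegrable (fun s : ℝ =>
            (1 / ((Nat.factorial w : ℝ) * 2 ^ w)) * (s ^ m * (1 - s ^ 2) ^ w))
            MeasureTheory.volume 0 1 := by
          apply Continuous.intervalIntegrable; fun_prop
        have i2 : IntervalIntegrable (fun s : ℝ =>
            v * ((1 / ((Nat.factorial w : ℝ) * 2 ^ w)) * (s ^ (m + 1) * (1 - s ^ 2) ^ w)))
            MeasureTheory.volume 0 1 := by
          apply Continuous.intervalIntegrable; fun_prop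
        rw [intervalIntegral.integral_add i1 i2, intervalIntegral.integral_const_mul,
          intervalIntegral.integral_const_mul, intervalIntegral.integral_const_mul,
          beta_int w m, beta_int w (m + 1)]
        have h1 : opp ((m:ℝ) + 1) (w + 1) ≠ 0 := ne_of_gt (opp_pos (by positivity) _)
        have h2 : opp ((m:ℝ) + 2) (w + 1) ≠ 0 := ne_of_gt (opp_pos (by positivity) _)
        have hw : (Nat.factorial w : ℝ) ≠ 0 := by positivity
        rw [ss, show (1:ℕ) + 1 = 2 from rfl, Finset.sum_range_succ, Finset.sum_range_one,
          tt_base10 w _ (by positivity), tt_base11 w _ (by positivity), pow_zero, mul_one,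
          pow_one, show ((m + 1 : ℕ) : ℝ) + 1 = (m : ℝ) + 2 from by push_cast; ring]
        field_simp
      · -- k + 2
        intro w m v
        have ih1 := ih (k + 1) (by omega) w
        have ih0 := ih k (by omega) (w + 1)
        have hsplit : ∀ s : ℝ, pp (k + 2) (w + 1) s v * s ^ m
            = pp (k + 1) (w + 1) s v * s ^ m + v * (pp (k + 1) (w + 1) s v * s ^ (m + 1))
              + ((k : ℝ) + 1) * (1 - v ^ 2) * (pp k (w + 2) s v * s ^ m) := by
          intro s
          rw [pp_rec]
          ring
        rw [intervalIntegral.integral_congr (fun s _ => hsplit s)]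
        have i1 := pp_intable (k + 1) (w + 1) m v
        have i2 := pp_intable (k + 1) (w + 1) (m + 1) v
        have i3 := pp_intable k (w + 2) m v
        rw [intervalIntegral.integral_add ((i1.add (i2.const_mul v)))
          (i3.const_mul _), intervalIntegral.integral_add i1 (i2.const_mul v),
          intervalIntegral.integral_const_mul, intervalIntegral.integral_const_mul]
        rw [← ih1 m v, ← ih1 (m + 1) v, ← ih0 m v]
        rw [show ((m + 1 : ℕ) : ℝ) = (m : ℝ) + 1 from by push_cast; ring]
        exact ss_rec k w (m : ℝ) v (by positivity)

lemma tt_eq_statement (k r j : ℕ) (x : ℝ) :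
    (Nat.choose k j : ℝ) * 2 ^ (k + r - 1) *
        (ascPochhammer ℝ (k + r - 1)).eval ((x - j + 2) / 2) /
        (ascPochhammer ℝ (k + 2 * r - 1)).eval (x + 1)
      = tt k r x j := by
  rw [poch_eval, poch_eval, tt, ← two_pow_mul_qq_half (x - j + 2) (k + r - 1)]
  ring


end BMVAux

theorem bmvA_integral_repr (k r : ℕ) (hk : 1 ≤ k) (hr : 1 ≤ r) (v ξ : ℝ) :
    bmvA k r v ξ =
      ∫ s in (0:ℝ)..1,
        (∑ ℓ ∈ Finset.range (k / 2 + 1),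
          (Nat.factorial k : ℝ) /
              ((Nat.factorial ℓ : ℝ) * (Nat.factorial (ℓ + r - 1) : ℝ) *
                (Nat.factorial (k - 2 * ℓ) : ℝ)) *
            (1 + s * v) ^ (k - 2 * ℓ) * ((1 - v ^ 2) / 2) ^ ℓ *
            ((1 - s ^ 2) / 2) ^ (ℓ + r - 1)) *
          Real.exp (s * ξ) := by
  obtain ⟨w, rfl⟩ : ∃ w, r = w + 1 := ⟨r - 1, by omega⟩
  -- step 1: rewrite bmvA through `ss` and `key`
  have step1 : bmvA k (w + 1) v ξ
      = ∑' m : ℕ, ∫ s in (0:ℝ)..1, pp k (w + 1) s v * s ^ m * ξ ^ m / (Nat.factorial m : ℝ) := by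
    rw [bmvA]
    refine tsum_congr fun m => ?_
    have h1 : ∑ j ∈ Finset.range (k + 1),
        (Nat.choose k j : ℝ) * 2 ^ (k + (w + 1) - 1) *
          (ascPochhammer ℝ (k + (w + 1) - 1)).eval (((m : ℝ) - j + 2) / 2) /
          (ascPochhammer ℝ (k + 2 * (w + 1) - 1)).eval ((m : ℝ) + 1) *
          v ^ j * ξ ^ m / (Nat.factorial m : ℝ)
        = ss k (w + 1) (m : ℝ) v * ξ ^ m / (Nat.factorial m : ℝ) := by
      rw [ss, Finset.sum_mul, Finset.sum_div]
      refine Finset.sum_congr rfl fun j _ => ?_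
      rw [tt_eq_statement]
    rw [h1, key k w m v, ← intervalIntegral.integral_mul_const, ← intervalIntegral.integral_div]
  rw [step1]
  -- step 2: swap sum and integral
  have h01 : (0:ℝ) ≤ 1 := by norm_num
  obtain ⟨C, hC⟩ := (isCompact_Icc (a := (0:ℝ)) (b := 1)).exists_bound_of_continuousOn
    (pp_cont k (w + 1) v).continuousOn
  set F : ℕ → ℝ → ℝ := fun m s => pp k (w + 1) s v * s ^ m * ξ ^ m / (Nat.factorial m : ℝ)
    with hF
  have hFint : ∀ m : ℕ, MeasureTheory.Integrable (F m)
      (MeasureTheory.volume.restrict (Set.Ioc (0:ℝ) 1)) := by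
    intro m
    have : Continuous (F m) := by
      rw [hF]
      have := pp_cont k (w + 1) v
      fun_prop
    exact this.integrableOn_Ioc
  have hbound : ∀ m : ℕ, (∫ s in Set.Ioc (0:ℝ) 1, ‖F m s‖) ≤ |C| * |ξ| ^ m / (Nat.factorial m : ℝ) := by
    intro m
    have hle : ∀ s ∈ Set.Ioc (0:ℝ) 1, ‖F m s‖ ≤ |C| * |ξ| ^ m / (Nat.factorial m : ℝ) := by
      intro s hs
      rw [hF]
      simp only [Real.norm_eq_abs, abs_div, abs_mul, abs_pow]
      have h1 : |pp k (w + 1) s v| ≤ |C| := by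
        refine le_trans ?_ (le_abs_self C)
        simpa using hC s ⟨le_of_lt hs.1, hs.2⟩
      have h2 : |s| ^ m ≤ 1 := by
        apply pow_le_one₀ (abs_nonneg s)
        rw [abs_le]
        constructor <;> [linarith [hs.1.le]; exact hs.2]
      have h3 : (0:ℝ) < (Nat.factorial m : ℝ) := by positivity
      rw [abs_of_pos h3]
      have hfin : |pp k (w + 1) s v| * |s| ^ m * |ξ| ^ m / (Nat.factorial m : ℝ)
          ≤ |C| * 1 * |ξ| ^ m / (Nat.factorial m : ℝ) := by
        gcongr
      simpa using hfin
    calc (∫ s in Set.Ioc (0:ℝ) 1, ‖F m s‖)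
        ≤ ∫ _s in Set.Ioc (0:ℝ) 1, |C| * |ξ| ^ m / (Nat.factorial m : ℝ) := by
          refine MeasureTheory.setIntegral_mono_on ((hFint m).norm) ?_ measurableSet_Ioc hle
          exact MeasureTheory.integrableOn_const (by simp [Real.volume_Ioc])
      _ = |C| * |ξ| ^ m / (Nat.factorial m : ℝ) := by
          rw [MeasureTheory.setIntegral_const, Real.volume_real_Ioc]
          norm_num
  have hsum : Summable fun m : ℕ => ∫ s in Set.Ioc (0:ℝ) 1, ‖F m s‖ := by
    refine Summable.of_nonneg_of_le
      (fun m => MeasureTheory.integral_nonneg fun s => norm_nonneg _) hbound ?_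
    simpa [mul_div_assoc] using (Real.summable_pow_div_factorial |ξ|).mul_left |C|
  calc (∑' m : ℕ, ∫ s in (0:ℝ)..1, F m s)
      = ∑' m : ℕ, ∫ s in Set.Ioc (0:ℝ) 1, F m s :=
        tsum_congr fun m => intervalIntegral.integral_of_le h01
    _ = ∫ s in Set.Ioc (0:ℝ) 1, ∑' m : ℕ, F m s :=
        MeasureTheory.integral_tsum_of_summable_integral_norm hFint hsum
    _ = ∫ s in Set.Ioc (0:ℝ) 1, pp k (w + 1) s v * Real.exp (s * ξ) := by
        refine MeasureTheory.integral_congr_ae (Filter.Eventually.of_forall fun s => ?_)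
        have hterm : ∀ m : ℕ, F m s = pp k (w + 1) s v * ((s * ξ) ^ m / (Nat.factorial m : ℝ)) := by
          intro m
          rw [hF, mul_pow]
          ring
        show (∑' m : ℕ, F m s) = pp k (w + 1) s v * Real.exp (s * ξ)
        rw [tsum_congr hterm, tsum_mul_left]
        congr 1
        rw [Real.exp_eq_exp_ℝ, NormedSpace.exp_eq_tsum_div]
    _ = ∫ s in (0:ℝ)..1, pp k (w + 1) s v * Real.exp (s * ξ) :=
        (intervalIntegral.integral_of_le h01).symm
    _ = ∫ s in (0:ℝ)..1,
        (∑ ℓ ∈ Finset.range (k / 2 + 1),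
          (Nat.factorial k : ℝ) /
              ((Nat.factorial ℓ : ℝ) * (Nat.factorial (ℓ + (w + 1) - 1) : ℝ) *
                (Nat.factorial (k - 2 * ℓ) : ℝ)) *
            (1 + s * v) ^ (k - 2 * ℓ) * ((1 - v ^ 2) / 2) ^ ℓ *
            ((1 - s ^ 2) / 2) ^ (ℓ + (w + 1) - 1)) *
          Real.exp (s * ξ) := by
        refine intervalIntegral.integral_congr fun s _ => ?_
        rw [pp_eq_statement]
end
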